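/- arXiv:2202.01048 — 5 statements merged into one kernel-verified Lean document; each statement's English description precedes it below -/
import Mathlib

section
/- Let (β_i)_{i ∈ ι} be a family of types and let F be the free group on the sigma type Σ i, β_i. For each i ∈ ι let H_i be the subgroup of F generated by the set {FreeGroup.of ⟨i, b⟩ : b ∈ β_i}. Then (H_i)_{i ∈ ι} is a malnormal collection in F: for all i, j ∈ ι and all g ∈ F, if g H_i g⁻¹ ∩ H_j ≠ {1}, then i = j and g ∈ H_i. -/
/-- The conjugate subgroup `g H g⁻¹`. -/
def conjSubgroup {G : Type*} [Group G] (g : G) (H : Subgroup G) : Subgroup G :=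
  H.map (MulAut.conj g).toMonoidHom

/-- A family of subgroups is a malnormal collection if
`g H i g⁻¹ ∩ H j ≠ {1}` implies `i = j` and `g ∈ H i`. -/
def IsMalnormalCollection {G : Type*} [Group G] {ι : Type*} (H : ι → Subgroup G) : Prop :=
  ∀ (i j : ι) (g : G), conjSubgroup g (H i) ⊓ H j ≠ ⊥ → i = j ∧ g ∈ H i

namespace FreeGroupMalnormalAux

open FreeGroup List

variable {α : Type*}

/-- no cancellable adjacent pair -/
def R : (α × Bool) → (α × Bool) → Prop := fun x y => ¬(x.1 = y.1 ∧ x.2 = !y.2)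

lemma reduce_of_chain' [DecidableEq α] (L : List (α × Bool)) : L.Chain' R → reduce L = L := by
  induction L with
  | nil => intro _; rfl
  | cons x L ih =>
    intro h
    unfold Chain' at h; rw [List.isChain_cons] at h
    rw [reduce.cons, ih h.2]
    cases L with
    | nil => rfl
    | cons hd tl =>
      have hR : R x hd := h.1 hd rfl
      simp only [R] at hR
      simp only [if_neg hR]

lemma chain'_reduce [DecidableEq α] (L : List (α × Bool)) : (reduce L).Chain' R := by
  induction L with
  | nil => exact List.isChain_nil
  | cons x L ih =>
    rw [reduce.cons]
    cases h : reduce L with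
    | nil => exact List.isChain_singleton _
    | cons hd tl =>
      rw [h] at ih
      dsimp only
      split_ifs with hc
      · exact ih.tail
      · exact ih.cons (fun y hy => by
          rw [List.head?_cons, Option.mem_some_iff] at hy
          subst hy
          exact fun hxy => hc ⟨hxy.1, hxy.2⟩)

lemma chain'_toWord [DecidableEq α] (x : FreeGroup α) : x.toWord.Chain' R := by
  classical
  rcases x with ⟨L⟩
  rw [show Quot.mk _ L = FreeGroup.mk L from rfl, toWord_mk]
  exact chain'_reduce L

end FreeGroupMalnormalAux

section Main

open FreeGroup List FreeGroupMalnormalAux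

private lemma mk_mem_closure {ι : Type*} {β : ι → Type*} (i : ι)
    (L : List ((Σ i, β i) × Bool)) (hL : ∀ l ∈ L, l.1.1 = i) :
    FreeGroup.mk L ∈ Subgroup.closure
      (Set.range fun b : β i => FreeGroup.of (⟨i, b⟩ : Σ i, β i)) := by
  induction L with
  | nil => rw [← one_eq_mk]; exact Subgroup.one_mem _
  | cons x L ih =>
    have hsplit : FreeGroup.mk (x :: L) = FreeGroup.mk [x] * FreeGroup.mk L := by
      rw [mul_mk]; rfl
    rw [hsplit]
    refine Subgroup.mul_mem _ ?_ (ih fun l hl => hL l (List.mem_cons_of_mem _ hl))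
    obtain ⟨⟨i', b⟩, c⟩ := x
    have hi : i' = i := hL _ List.mem_cons_self
    subst hi
    have hof : FreeGroup.of (⟨i', b⟩ : Σ i, β i) ∈ Subgroup.closure
        (Set.range fun b : β i' => FreeGroup.of (⟨i', b⟩ : Σ i, β i)) :=
      Subgroup.subset_closure ⟨b, rfl⟩
    cases c with
    | true => exact hof
    | false =>
      have hinv : FreeGroup.mk [((⟨i', b⟩ : Σ i, β i), false)]
          = (FreeGroup.of (⟨i', b⟩ : Σ i, β i))⁻¹ := by
        rw [FreeGroup.of, inv_mk]; rfl
      rw [hinv]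
      exact Subgroup.inv_mem _ hof

private lemma mem_closure_letters {ι : Type*} {β : ι → Type*} [DecidableEq (Σ i, β i)] {i : ι}
    {x : FreeGroup (Σ i, β i)}
    (hx : x ∈ Subgroup.closure
      (Set.range fun b : β i => FreeGroup.of (⟨i, b⟩ : Σ i, β i))) :
    ∀ l ∈ x.toWord, l.1.1 = i := by
  induction hx using Subgroup.closure_induction with
  | mem x hx =>
    obtain ⟨b, rfl⟩ := hx
    intro l hl
    rw [toWord_of, List.mem_singleton] at hl
    subst hl; rfl
  | one => intro l hl; rw [toWord_one] at hl; cases hl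
  | mul x y _ _ hx hy =>
    intro l hl
    have hsub := (toWord_mul_sublist x y).subset hl
    rcases List.mem_append.1 hsub with h | h
    · exact hx l h
    · exact hy l h
  | inv x _ hx =>
    intro l hl
    rw [toWord_inv, invRev, List.mem_reverse, List.mem_map] at hl
    obtain ⟨l', hl', rfl⟩ := hl
    exact hx l' hl'

/-- In a free group on `Σ i, β i`, the subgroups generated by the pairwise disjoint
pieces of the free basis form a malnormal collection. -/
theorem freeGroup_disjoint_basis_malnormalCollection {ι : Type*} (β : ι → Type*) :
    IsMalnormalCollection
      (fun i : ι => Subgroup.closure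
        (Set.range fun b : β i => FreeGroup.of (⟨i, b⟩ : Σ i, β i))) := by
  classical
  intro i j g hne
  obtain ⟨⟨x, hx⟩, hx1⟩ := Subgroup.ne_bot_iff_exists_ne_one.1 hne
  rw [ne_eq, Subgroup.mk_eq_one] at hx1
  obtain ⟨hxconj, hxj⟩ := hx
  obtain ⟨h, hh, rfl⟩ := hxconj
  simp only [MulEquiv.coe_toMonoidHom, MulAut.conj_apply] at hxj hx1 ⊢
  have hh1 : h ≠ 1 := by rintro rfl; simp at hx1
  -- split the reduced word of g into a part `a` and a trailing part `t` of index-`i` letters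
  set p : ((Σ i, β i) × Bool) → Bool := fun l => decide (l.1.1 = i) with hp
  set rw' := g.toWord.reverse with hrw
  set a : List ((Σ i, β i) × Bool) := (rw'.dropWhile p).reverse with ha
  set t : List ((Σ i, β i) × Bool) := (rw'.takeWhile p).reverse with ht
  have hw : g = FreeGroup.mk a * FreeGroup.mk t := by
    rw [mul_mk, ha, ht, ← List.reverse_append, List.takeWhile_append_dropWhile,
      hrw, List.reverse_reverse, mk_toWord]
  have ht_mem : ∀ l ∈ t, l.1.1 = i := fun l hl => by
    have := List.mem_takeWhile_imp (List.mem_reverse.1 hl)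
    simpa [hp] using this
  have htH : FreeGroup.mk t ∈ Subgroup.closure
      (Set.range fun b : β i => FreeGroup.of (⟨i, b⟩ : Σ i, β i)) :=
    mk_mem_closure i t ht_mem
  set h' : FreeGroup (Σ i, β i) := FreeGroup.mk t * h * (FreeGroup.mk t)⁻¹ with hh'
  have hh'H : h' ∈ Subgroup.closure
      (Set.range fun b : β i => FreeGroup.of (⟨i, b⟩ : Σ i, β i)) :=
    Subgroup.mul_mem _ (Subgroup.mul_mem _ htH hh) (Subgroup.inv_mem _ htH)
  have hh'1 : h' ≠ 1 := fun hcon => hh1 (by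
    have : h = (FreeGroup.mk t)⁻¹ * h' * FreeGroup.mk t := by rw [hh']; group
    rw [this, hcon]; group)
  set u := h'.toWord with hu
  have hu_ne : u ≠ [] := fun hcon => hh'1 (toWord_eq_nil_iff.1 hcon)
  have hu_mem : ∀ l ∈ u, l.1.1 = i := mem_closure_letters hh'H
  -- the conjugate is `mk (a ++ u ++ invRev a)` and that word is reduced
  have hconj : g * h * g⁻¹ = FreeGroup.mk (a ++ (u ++ invRev a)) := by
    have : g * h * g⁻¹ = FreeGroup.mk a * h' * (FreeGroup.mk a)⁻¹ := by
      rw [hw, hh']; group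
    rw [this, ← mk_toWord (x := h'), ← hu, inv_mk, mul_mk, mul_mk, List.append_assoc]
  -- chain conditions
  have hchain_w : g.toWord.Chain' R := chain'_toWord g
  have hchain_rw : rw'.Chain' (flip R) := by
    rw [hrw]; refine List.isChain_reverse.2 ?_
    exact hchain_w
  have hchain_a : a.Chain' R := by
    unfold Chain'; rw [ha, List.isChain_reverse]
    exact hchain_rw.suffix (List.dropWhile_suffix p)
  have hchain_u : u.Chain' R := chain'_toWord h'
  have hchain_ia : (invRev a).Chain' R := by
    unfold Chain'; rw [invRev, List.isChain_reverse, List.isChain_map]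
    refine hchain_a.imp ?_
    rintro x y hxy ⟨h1, h2⟩
    simp only [Bool.not_not] at h2
    exact hxy ⟨h1.symm, h2.symm⟩
  have hlast_a : ∀ l ∈ a.getLast?, l.1.1 ≠ i := by
    intro l hl
    rw [ha, List.getLast?_reverse] at hl
    have hne' : rw'.dropWhile p ≠ [] := by
      rintro hnil; rw [hnil] at hl; cases hl
    have hfalse := List.head_dropWhile_not p hne'
    have hl' : l = (rw'.dropWhile p).head hne' := by
      rwa [List.head?_eq_head hne', Option.mem_some_iff, eq_comm] at hl
    rw [hl']
    simpa [hp] using hfalse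
  have hchain_all : (a ++ (u ++ invRev a)).Chain' R := by
    unfold Chain'; rw [List.isChain_append]
    refine ⟨hchain_a, ?_, ?_⟩
    · rw [List.isChain_append]
      refine ⟨hchain_u, hchain_ia, ?_⟩
      intro x hx y hy
      have hxi : x.1.1 = i := hu_mem x (List.mem_of_mem_getLast? hx)
      have hyi : y.1.1 ≠ i := by
        rw [invRev, List.head?_reverse, List.getLast?_map, Option.mem_def,
          Option.map_eq_some_iff] at hy
        obtain ⟨z, hz, rfl⟩ := hy
        exact hlast_a z hz
      rintro ⟨h1, -⟩
      exact hyi (by rw [← congrArg Sigma.fst h1]; exact hxi)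
    · intro x hx y hy
      have hxi : x.1.1 ≠ i := hlast_a x hx
      cases hcu : u with
      | nil => exact absurd hcu hu_ne
      | cons y0 u'' =>
        rw [hcu, List.cons_append, List.head?_cons, Option.mem_some_iff] at hy
        have hyi : y.1.1 = i := hu_mem y (by rw [← hy, hcu]; exact List.mem_cons_self)
        rintro ⟨h1, -⟩
        exact hxi (by rw [congrArg Sigma.fst h1]; exact hyi)
  have hxword : (g * h * g⁻¹).toWord = a ++ (u ++ invRev a) := by
    rw [hconj, toWord_mk, reduce_of_chain' _ hchain_all]
  have hxj_mem : ∀ l ∈ a ++ (u ++ invRev a), l.1.1 = j := by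
    have hmem := mem_closure_letters hxj
    rwa [hxword] at hmem
  obtain ⟨y0, hy0⟩ := List.exists_mem_of_ne_nil u hu_ne
  have hij : i = j :=
    (hu_mem y0 hy0).symm.trans
      (hxj_mem y0 (List.mem_append.2 (Or.inr (List.mem_append.2 (Or.inl hy0)))))
  have ha_nil : a = [] := by
    by_contra hne'
    have h1 := hlast_a _ (List.getLast_mem_getLast? hne')
    have h2 := hxj_mem _ (List.mem_append.2 (Or.inl (List.getLast_mem hne')))
    rw [← hij] at h2
    exact h1 h2
  refine ⟨hij, ?_⟩
  have hg : g = FreeGroup.mk t := by rw [hw, ha_nil, ← one_eq_mk, one_mul]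
  rw [hg]
  exact htH

end Main
end

section
/- Let G be a group, k ≥ 1, and let ψ : FreeGroup (Fin k × Fin 2) →* G be an injective group homomorphism whose range J is a malnormal subgroup of G. For each i ∈ Fin k let H_i be the subgroup of G generated by the two elements ψ(FreeGroup.of (i, 0)) and ψ(FreeGroup.of (i, 1)). Then (H_i)_{i ∈ Fin k} is a malnormal collection in G: for all i, j ∈ Fin k and all g ∈ G, if g H_i g⁻¹ ∩ H_j ≠ {1}, then i = j and g ∈ H_i. -/
/-- A subgroup `H` of `G` is malnormal if `g H g⁻¹ ∩ H ≠ {1}` implies `g ∈ H`. -/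
def IsMalnormal {G : Type*} [Group G] (H : Subgroup G) : Prop :=
  ∀ g : G, conjSubgroup g H ⊓ H ≠ ⊥ → g ∈ H

namespace MalAux

open FreeGroup List

variable {α : Type*} [DecidableEq α]

lemma conj_ne_one {G : Type*} [Group G] {x u : G} (hu : u ≠ 1) : x * u * x⁻¹ ≠ 1 := by
  intro h
  apply hu
  have h2 : u = x⁻¹ * (x * u * x⁻¹) * x := by group
  rw [h2, h, mul_one, inv_mul_cancel]

/-- Relation expressing that two adjacent letters do not cancel. -/
def Rd : (α × Bool) → (α × Bool) → Prop := fun a b => ¬(b.1 = a.1 ∧ b.2 = !a.2)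

lemma chain'_reduce : ∀ L : List (α × Bool), List.Chain' Rd (reduce L)
  | [] => by exact List.isChain_nil
  | x :: L => by
      have ih := chain'_reduce L
      rw [reduce.cons]
      rcases h : reduce L with _ | ⟨hd, tl⟩
      · exact List.isChain_singleton _
      · rw [h] at ih
        by_cases hc : x.1 = hd.1 ∧ x.2 = !hd.2
        · simp only [hc, if_true]
          exact ih.tail
        · simp only [hc, if_false]
          refine List.IsChain.cons_cons ?_ ih
          intro hR
          apply hc
          obtain ⟨h1, h2⟩ := hR
          refine ⟨h1.symm, ?_⟩
          cases hx : x.2 <;> cases hh : hd.2 <;> simp_all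

lemma chain'_toWord (x : FreeGroup α) : List.Chain' Rd x.toWord := by
  rw [← reduce_toWord]; exact chain'_reduce _

lemma reduce_eq_self {L : List (α × Bool)} (h : List.Chain' Rd L) : reduce L = L := by
  have hred : Red L (reduce L) := reduce.red
  rcases Relation.ReflTransGen.cases_head hred with heq | ⟨M, hstep, _⟩
  · exact heq.symm
  · exfalso
    cases hstep with
    | @not L₁ L₂ x b =>
      have h2 := (List.isChain_append.mp h).2.1
      have := (List.isChain_cons_cons.mp h2).1
      exact this ⟨rfl, rfl⟩

lemma toWord_mk_eq {L : List (α × Bool)} (h : List.Chain' Rd L) : (mk L).toWord = L := by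
  rw [toWord_mk, reduce_eq_self h]

variable {ι : Type*} (c : α → ι)

/-- The subgroup of elements all of whose letters have color `i`. -/
def S (i : ι) : Subgroup (FreeGroup α) where
  carrier := {x | ∀ p ∈ x.toWord, c p.1 = i}
  one_mem' := by intro p hp; rw [toWord_one] at hp; simp at hp
  mul_mem' := by
    intro x y hx hy p hp
    have := (toWord_mul_sublist x y).subset hp
    rcases List.mem_append.mp this with h | h
    · exact hx p h
    · exact hy p h
  inv_mem' := by
    intro x hx p hp
    rw [toWord_inv] at hp
    unfold invRev at hp
    rw [List.mem_reverse, List.mem_map] at hp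
    obtain ⟨q, hq, rfl⟩ := hp
    exact hx q hq

lemma mem_S {i : ι} {x : FreeGroup α} :
    x ∈ S c i ↔ ∀ p ∈ x.toWord, c p.1 = i := Iff.rfl

/-- Key combinatorial step: conjugating a nontrivial `i`-colored element by `mk P`
where `P` is a reduced word whose last letter is not `i`-colored gives a reduced word
`P ++ u.toWord ++ invRev P`. -/
lemma toWord_conj {i : ι} {P : List (α × Bool)} (hP : List.Chain' Rd P)
    (hPne : P ≠ []) (hlast : c (P.getLast hPne).1 ≠ i)
    {u : FreeGroup α} (hu : u ∈ S c i) (hu1 : u ≠ 1) :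
    (mk P * u * (mk P)⁻¹).toWord = P ++ u.toWord ++ invRev P := by
  have hUne : u.toWord ≠ [] := fun h => hu1 (toWord_eq_nil_iff.mp h)
  have hU : List.Chain' Rd u.toWord := chain'_toWord u
  have hinvP : List.Chain' Rd (invRev P) := by
    have := chain'_reduce (invRev P)
    rwa [reduce_invRev, reduce_eq_self hP] at this
  have hlast? : P.getLast? = some (P.getLast hPne) := List.getLast?_eq_getLast _
  -- junction conditions
  have hchain : List.Chain' Rd (P ++ (u.toWord ++ invRev P)) := by
    rw [List.Chain', List.isChain_append]
    refine ⟨hP, ?_, ?_⟩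
    · rw [List.isChain_append]
      refine ⟨hU, hinvP, ?_⟩
      intro x hx y hy
      have hxcol : c x.1 = i := hu x (List.mem_of_mem_getLast? hx)
      have hycol : c y.1 ≠ i := by
        unfold invRev at hy
        rw [List.head?_reverse, List.getLast?_map, hlast?] at hy
        obtain rfl : ((P.getLast hPne).1, !(P.getLast hPne).2) = y := by simpa using hy
        exact hlast
      intro ⟨h1, _⟩
      exact hycol (h1 ▸ hxcol)
    · intro x hx y hy
      have hxcol : c x.1 ≠ i := by
        rw [hlast?] at hx
        simp only [Option.mem_def, Option.some.injEq] at hx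
        rw [← hx]; exact hlast
      have hycol : c y.1 = i := by
        have : y ∈ (u.toWord ++ invRev P).head? := hy
        rw [List.head?_append_of_ne_nil _ hUne] at this
        exact hu y (List.mem_of_mem_head? this)
      intro ⟨h1, _⟩
      exact hxcol (h1 ▸ hycol)
  have : mk P * u * (mk P)⁻¹ = mk (P ++ (u.toWord ++ invRev P)) := by
    conv_lhs => rw [← mk_toWord (x := u)]
    rw [inv_mk, mul_mk, mul_mk, List.append_assoc]
  rw [this, toWord_mk_eq hchain, List.append_assoc]

/-- Main free-group lemma: conjugation between color subgroups. -/
lemma main {i j : ι} : ∀ n (w : FreeGroup α), w.toWord.length = n →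
    ∀ u : FreeGroup α, u ∈ S c i → u ≠ 1 → w * u * w⁻¹ ∈ S c j →
    i = j ∧ w ∈ S c i := by
  intro n
  induction n using Nat.strong_induction_on with
  | _ n ih =>
    intro w hlen u hu hu1 hc
    have hUne : u.toWord ≠ [] := fun h => hu1 (toWord_eq_nil_iff.mp h)
    by_cases hw : w ∈ S c i
    · refine ⟨?_, hw⟩
      -- w u w⁻¹ is a nontrivial element of both S i and S j
      have hmem_i : w * u * w⁻¹ ∈ S c i := by
        exact mul_mem (mul_mem hw hu) (inv_mem hw)
      have hne : w * u * w⁻¹ ≠ 1 := conj_ne_one hu1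
      have hne' : (w * u * w⁻¹).toWord ≠ [] := fun h => hne (toWord_eq_nil_iff.mp h)
      obtain ⟨p, hp⟩ := List.exists_mem_of_ne_nil _ hne'
      rw [← hmem_i p hp, hc p hp]
    · -- w has some letter of color ≠ i
      exfalso
      rcases List.eq_nil_or_concat w.toWord with hnil | ⟨P, a, hPa⟩
      · exact hw (fun p hp => absurd (hnil ▸ hp) List.not_mem_nil)
      · rw [List.concat_eq_append] at hPa
        have hchainw : List.Chain' Rd w.toWord := chain'_toWord w
        by_cases ha : c a.1 = i
        · -- peel off the last letter
          have hsplit : w = mk P * mk [a] := by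
            rw [mul_mk, ← hPa, mk_toWord]
          have hchainP : List.Chain' Rd P := by
            rw [hPa] at hchainw
            exact (List.isChain_append.mp hchainw).1
          have ha_mem : mk [a] ∈ S c i := by
            intro p hp
            rw [toWord_mk, reduce_singleton, List.mem_singleton] at hp
            subst hp; exact ha
          have hu' : mk [a] * u * (mk [a])⁻¹ ∈ S c i :=
            mul_mem (mul_mem ha_mem hu) (inv_mem ha_mem)
          have hu'1 : mk [a] * u * (mk [a])⁻¹ ≠ 1 := conj_ne_one hu1
          have hWP : (mk P).toWord = P := toWord_mk_eq hchainP
          have hlenP : (mk P).toWord.length < n := by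
            rw [hWP, ← hlen, hPa]
            simp
          have hc' : mk P * (mk [a] * u * (mk [a])⁻¹) * (mk P)⁻¹ ∈ S c j := by
            have : mk P * (mk [a] * u * (mk [a])⁻¹) * (mk P)⁻¹ = w * u * w⁻¹ := by
              rw [hsplit]; group
            rw [this]; exact hc
          obtain ⟨hij, hPmem⟩ := ih _ hlenP (mk P) rfl _ hu' hu'1 hc'
          exact hw (hsplit ▸ mul_mem hPmem ha_mem)
        · -- the last letter of w has color ≠ i : direct contradiction
          have hPane : w.toWord ≠ [] := by rw [hPa]; simp
          have hlast : w.toWord.getLast hPane = a := by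
            simp [hPa]
          have hlastcol : c (w.toWord.getLast hPane).1 ≠ i := by rw [hlast]; exact ha
          have hW : mk w.toWord = w := mk_toWord
          have htw := toWord_conj c (chain'_toWord w) hPane hlastcol hu hu1
          rw [hW] at htw
          -- last letter of w.toWord appears in toWord of the conjugate
          have hmem1 : w.toWord.getLast hPane ∈ (w * u * w⁻¹).toWord := by
            rw [htw]
            exact List.mem_append_left _ (List.mem_append_left _ (List.getLast_mem _))
          obtain ⟨q, hq⟩ := List.exists_mem_of_ne_nil _ hUne
          have hmem2 : q ∈ (w * u * w⁻¹).toWord := by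
            rw [htw]
            exact List.mem_append_left _ (List.mem_append_right _ hq)
          have h1 := hc _ hmem1
          have h2 := hc _ hmem2
          rw [hu q hq] at h2
          exact hlastcol (h1.trans h2.symm)

/-- The closure of `{of (i,0), of (i,1)}` is the color subgroup for `Prod.fst`. -/
lemma closure_pair_eq {k : ℕ} (i : Fin k) :
    Subgroup.closure {FreeGroup.of ((i, 0) : Fin k × Fin 2), FreeGroup.of (i, 1)} =
      S (Prod.fst : Fin k × Fin 2 → Fin k) i := by
  apply _root_.le_antisymm
  · rw [Subgroup.closure_le]
    rintro x (rfl | rfl) <;>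
    · intro p hp
      rw [toWord_of, List.mem_singleton] at hp
      subst hp
      rfl
  · intro x hx
    rw [← mk_toWord (x := x)]
    have : ∀ L : List ((Fin k × Fin 2) × Bool), (∀ p ∈ L, p.1.1 = i) →
        mk L ∈ Subgroup.closure {FreeGroup.of ((i, 0) : Fin k × Fin 2), FreeGroup.of (i, 1)} := by
      intro L
      induction L with
      | nil => intro _; rw [← one_eq_mk]; exact one_mem _
      | cons a L ihL =>
        intro hL
        have hmk : mk (a :: L) = mk [a] * mk L := by rw [mul_mk]; rfl
        have ha : a.1.1 = i := hL a List.mem_cons_self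
        have hofa : FreeGroup.of a.1 ∈
            Subgroup.closure {FreeGroup.of ((i, 0) : Fin k × Fin 2), FreeGroup.of (i, 1)} := by
          apply Subgroup.subset_closure
          have : a.1 = (i, a.1.2) := by rw [← ha]
          rw [this]
          rcases (by decide : ∀ b : Fin 2, b = 0 ∨ b = 1) a.1.2 with h | h <;> rw [h]
          · exact Set.mem_insert _ _
          · exact Set.mem_insert_iff.mpr (Or.inr rfl)
        have hsingle : mk [a] ∈
            Subgroup.closure {FreeGroup.of ((i, 0) : Fin k × Fin 2), FreeGroup.of (i, 1)} := by
          obtain ⟨x, b⟩ := a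
          cases b
          · have : mk [(x, false)] = (FreeGroup.of x)⁻¹ := by
              rw [show FreeGroup.of x = mk [(x, true)] from rfl, inv_mk]
              rfl
            rw [this]
            exact inv_mem hofa
          · exact hofa
        rw [hmk]
        exact mul_mem hsingle (ihL (fun p hp => hL p (List.mem_cons_of_mem _ hp)))
    exact this x.toWord hx

end MalAux

/-- If `J = ⟨a₁, b₁, …, a_k, b_k⟩` is a malnormal free subgroup of `G` with free basis
the `aᵢ, bᵢ`, then the two-generator subgroups `H i = ⟨aᵢ, bᵢ⟩` form a malnormal
collection in `G`. -/
theorem pairs_malnormalCollection {G : Type*} [Group G] (k : ℕ) (hk : 1 ≤ k)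
    (ψ : FreeGroup (Fin k × Fin 2) →* G) (hψ : Function.Injective ψ)
    (hJ : IsMalnormal ψ.range) :
    IsMalnormalCollection
      (fun i : Fin k => Subgroup.closure
        {ψ (FreeGroup.of (i, 0)), ψ (FreeGroup.of (i, 1))}) := by
  classical
  intro i j g hne
  set K : Fin k → Subgroup (FreeGroup (Fin k × Fin 2)) :=
    fun i => Subgroup.closure {FreeGroup.of (i, 0), FreeGroup.of (i, 1)} with hK
  have hH : ∀ i : Fin k,
      Subgroup.closure {ψ (FreeGroup.of (i, 0)), ψ (FreeGroup.of (i, 1))} = (K i).map ψ := by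
    intro i
    rw [hK]
    rw [MonoidHom.map_closure, Set.image_pair]
  -- extract a nontrivial element of the intersection
  obtain ⟨x, hx, hx1⟩ : ∃ x, x ∈ conjSubgroup g
      (Subgroup.closure {ψ (FreeGroup.of (i, 0)), ψ (FreeGroup.of (i, 1))}) ⊓
      Subgroup.closure {ψ (FreeGroup.of (j, 0)), ψ (FreeGroup.of (j, 1))} ∧ x ≠ 1 := by
    by_contra h
    push_neg at h
    exact hne (Subgroup.eq_bot_iff_forall _ |>.mpr fun x hx => h x hx)
  obtain ⟨hx_conj, hx_j⟩ := Subgroup.mem_inf.mp hx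
  rw [conjSubgroup, Subgroup.mem_map] at hx_conj
  obtain ⟨y, hy_mem, hy_eq⟩ := hx_conj
  have hy_eq' : g * y * g⁻¹ = x := hy_eq
  -- write y, x as images of free group elements
  rw [hH i, Subgroup.mem_map] at hy_mem
  obtain ⟨u, hu_mem, rfl⟩ := hy_mem
  rw [hH j, Subgroup.mem_map] at hx_j
  obtain ⟨v, hv_mem, hv_eq⟩ := hx_j
  have hu1 : u ≠ 1 := by
    rintro rfl
    apply hx1
    rw [← hy_eq', map_one, mul_one, mul_inv_cancel]
  -- malnormality of the range gives g ∈ range ψ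
  have hgJ : g ∈ ψ.range := by
    apply hJ
    intro hbot
    apply hx1
    have hx_in : x ∈ conjSubgroup g ψ.range ⊓ ψ.range := by
      refine Subgroup.mem_inf.mpr ⟨?_, ⟨v, hv_eq⟩⟩
      rw [conjSubgroup, Subgroup.mem_map]
      exact ⟨ψ u, ⟨u, rfl⟩, hy_eq⟩
    rw [hbot] at hx_in
    exact hx_in
  obtain ⟨w, rfl⟩ := hgJ
  -- transfer to the free group
  have hconj : w * u * w⁻¹ ∈ K j := by
    have : ψ (w * u * w⁻¹) = ψ v := by
      rw [map_mul, map_mul, map_inv, hy_eq', ← hv_eq]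
    rwa [hψ this]
  have hKS : ∀ i : Fin k, K i = MalAux.S (Prod.fst : Fin k × Fin 2 → Fin k) i := by
    intro i
    rw [hK]
    exact MalAux.closure_pair_eq i
  have hmain := MalAux.main (Prod.fst : Fin k × Fin 2 → Fin k)
    (w.toWord.length) w rfl u (by rw [← hKS i]; exact hu_mem) hu1
    (by rw [← hKS j]; exact hconj)
  obtain ⟨hij, hw⟩ := hmain
  refine ⟨hij, ?_⟩
  show ψ w ∈ Subgroup.closure {ψ (FreeGroup.of (i, 0)), ψ (FreeGroup.of (i, 1))}
  rw [hH i, Subgroup.mem_map]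
  exact ⟨w, by rw [hKS i]; exact hw, rfl⟩
end

section
/- Let F be a free group of finite rank n ≥ 2. Then for every k ∈ ℕ there exists a family H₁, …, H_k of subgroups of F forming a malnormal collection, such that each H_i is free of rank 2 (i.e. there is an injective homomorphism from the free group on two generators onto H_i) and each H_i has infinite index in F. -/
set_option linter.unusedSectionVars false

namespace Mal
open FreeGroup List

variable {α : Type*} [DecidableEq α]

/-- non-cancelling adjacency -/
def RW (p q : α × Bool) : Prop := q ≠ (p.1, !p.2)

def Reduced (l : List (α × Bool)) : Prop := l.Chain' RW

lemma flip_flip (p : α × Bool) : (((p.1, !p.2) : α × Bool).1, !((p.1, !p.2) : α × Bool).2) = p := by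
  simp

lemma flip_eq {p q : α × Bool} : q = (p.1, !p.2) ↔ p = (q.1, !q.2) := by
  constructor <;> intro h <;> rw [h, flip_flip]

lemma rw_symm {p q : α × Bool} (h : RW p q) : RW q p := fun he => h (flip_eq.mp he)

lemma reduce_eq_self {l : List (α × Bool)} (h : Reduced l) : reduce l = l := by
  induction l with
  | nil => rfl
  | cons x L ih =>
    rw [reduce.cons, ih h.tail]
    cases L with
    | nil => rfl
    | cons y T =>
      have hxy : RW x y := (List.isChain_cons_cons.mp h).1
      have : ¬(x.1 = y.1 ∧ x.2 = !y.2) := by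
        rintro ⟨h1, h2⟩
        exact hxy (Prod.ext h1.symm (by rw [h2]; simp))
      simp [this]

lemma toWord_mk' {l : List (α × Bool)} (h : Reduced l) : (mk l).toWord = l := by
  rw [toWord_mk, reduce_eq_self h]

lemma reduced_reduce (l : List (α × Bool)) : Reduced (reduce l) := by
  induction l with
  | nil => exact List.isChain_nil
  | cons x L ih =>
    rw [reduce.cons]
    cases h : reduce L with
    | nil => exact List.isChain_singleton x
    | cons y T =>
      rw [h] at ih
      by_cases hc : x.1 = y.1 ∧ x.2 = !y.2
      · simp only [if_pos hc]; exact ih.tail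
      · simp only [if_neg hc]
        refine List.isChain_cons_cons.mpr ⟨?_, ih⟩
        intro he
        exact hc ⟨by rw [he], by rw [he]; simp⟩

lemma reduced_toWord (x : FreeGroup α) : Reduced x.toWord := by
  have : Reduced (reduce x.toWord) := reduced_reduce _
  rwa [reduce_toWord] at this

lemma reduced_invRev {l : List (α × Bool)} (h : Reduced l) : Reduced (invRev l) := by
  unfold FreeGroup.invRev
  rw [Reduced, List.Chain', List.isChain_reverse]
  rw [List.isChain_map]
  refine List.IsChain.imp ?_ h
  intro a b hab he
  rw [flip_flip b] at he
  exact hab he.symm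


def CycOk (l : List (α × Bool)) : Prop := ∀ y ∈ l.getLast?, ∀ x ∈ l.head?, RW y x

lemma rw_self (p : α × Bool) : RW p p := by
  rcases p with ⟨a, s⟩; simp [RW, Prod.ext_iff]

lemma mk_singleton_inv (x : α × Bool) : (mk [x] : FreeGroup α)⁻¹ = mk [(x.1, !x.2)] := by
  rw [inv_mk]; simp [invRev]

lemma eq_nil_or_concat' (l : List (α × Bool)) : l = [] ∨ ∃ L b, l = L ++ [b] := by
  rcases List.eq_nil_or_concat l with h | ⟨L, b, h⟩
  · exact Or.inl h
  · exact Or.inr ⟨L, b, by simpa using h⟩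

lemma statA :
    ∀ (N : ℕ) (f : FreeGroup α) (X Y : List (α × Bool)),
      f.toWord.length ≤ N →
      Reduced X → X ≠ [] → CycOk X → Reduced Y → CycOk Y →
      f * mk X * f⁻¹ = mk Y →
      ∃ (m : ℤ) (s t : List (α × Bool)),
        X = s ++ t ∧ Y = t ++ s ∧ f = (mk Y) ^ m * mk t := by
  have base : ∀ (f : FreeGroup α) (X Y : List (α × Bool)), f = 1 →
      Reduced X → Reduced Y →
      f * mk X * f⁻¹ = mk Y →
      ∃ (m : ℤ) (s t : List (α × Bool)),
        X = s ++ t ∧ Y = t ++ s ∧ f = (mk Y) ^ m * mk t := by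
    intro f X Y hf hX hY heq
    subst hf
    have h1 : mk X = mk Y := by simpa using heq
    have hXY : X = Y := by
      have := congrArg toWord h1
      rwa [toWord_mk' hX, toWord_mk' hY] at this
    exact ⟨0, X, [], by simp, by simp [hXY], by simp [← one_eq_mk]⟩
  intro N
  induction N with
  | zero =>
    intro f X Y hlen hX hXne hXc hY hYc heq
    have hf : f = 1 := toWord_eq_nil_iff.mp (List.eq_nil_of_length_eq_zero (Nat.le_zero.mp hlen))
    exact base f X Y hf hX hY heq
  | succ N ih =>
    intro f X Y hlen hX hXne hXc hY hYc heq
    rcases eq_nil_or_concat' f.toWord with hf | ⟨fw', cl, hfw⟩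
    · exact base f X Y (toWord_eq_nil_iff.mp hf) hX hY heq
    · have hfr : Reduced f.toWord := reduced_toWord f
      have hfw'red : Reduced fw' := by
        have h2 := hfr; rw [hfw] at h2
        exact (List.isChain_append.mp h2).1
      set f' : FreeGroup α := mk fw' with hf'def
      have hf'word : f'.toWord = fw' := toWord_mk' hfw'red
      have hf'len : f'.toWord.length ≤ N := by
        have h3 := hlen; rw [hfw] at h3; simp at h3
        rw [hf'word]; omega
      have hsplit : f = f' * mk [cl] := by
        conv_lhs => rw [← mk_toWord (x := f)]
        rw [hfw, mul_mk]
      obtain ⟨x₁, X'', rfl⟩ : ∃ x₁ X'', X = x₁ :: X'' := by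
        cases X with
        | nil => exact absurd rfl hXne
        | cons a l => exact ⟨a, l, rfl⟩
      by_cases hA : cl = (x₁.1, !x₁.2)
      · -- left rotation case
        have hc1 : (mk [x₁] : FreeGroup α)⁻¹ = mk [cl] := by rw [mk_singleton_inv, hA]
        have key : mk [cl] * mk (x₁ :: X'') * (mk [cl])⁻¹ = mk (X'' ++ [x₁]) := by
          have h4 : (mk (x₁ :: X'') : FreeGroup α) = mk [x₁] * mk X'' := by
            rw [mul_mk]; rfl
          rw [h4, ← hc1, ← mul_mk]
          group
        have heq' : f' * mk (X'' ++ [x₁]) * f'⁻¹ = mk Y := by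
          rw [hsplit] at heq
          rw [← key]
          calc f' * (mk [cl] * mk (x₁ :: X'') * (mk [cl])⁻¹) * f'⁻¹
              = f' * mk [cl] * mk (x₁ :: X'') * (f' * mk [cl])⁻¹ := by group
          _ = mk Y := heq
        have hX1red : Reduced (X'' ++ [x₁]) := by
          rcases X'' with _ | ⟨y, T⟩
          · exact List.isChain_singleton x₁
          · rw [Reduced, List.Chain', List.isChain_append]
            refine ⟨hX.tail, List.isChain_singleton x₁, ?_⟩
            intro z hz w hw
            simp only [List.head?_cons, Option.mem_def, Option.some.injEq] at hw
            subst hw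
            refine hXc z ?_ x₁ (by simp)
            rw [List.getLast?_cons_cons]
            exact hz
        have hX1c : CycOk (X'' ++ [x₁]) := by
          intro yy hyy xx hxx
          rw [List.getLast?_concat] at hyy
          simp only [Option.mem_def, Option.some.injEq] at hyy
          subst hyy
          rcases X'' with _ | ⟨y, T⟩
          · simp only [List.nil_append, List.head?_cons, Option.mem_def, Option.some.injEq] at hxx
            subst hxx; exact rw_self x₁
          · simp only [List.cons_append, List.head?_cons, Option.mem_def, Option.some.injEq] at hxx
            subst hxx
            exact (List.isChain_cons_cons.mp hX).1
        obtain ⟨m, s', t', hX1eq, hYeq, hf'eq⟩ :=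
          ih f' (X'' ++ [x₁]) Y hf'len hX1red (by simp) hX1c hY hYc heq'
        rcases eq_nil_or_concat' t' with rfl | ⟨t'', z, rfl⟩
        · rw [List.append_nil] at hX1eq
          refine ⟨m - 1, [x₁], X'', rfl, ?_, ?_⟩
          · rw [hYeq, ← hX1eq]; simp
          · have hY' : mk Y = mk X'' * mk [x₁] := by
              rw [hYeq, ← hX1eq, ← mul_mk]; simp
            rw [hsplit, hf'eq, ← one_eq_mk]
            have h5 : (mk Y)⁻¹ * mk X'' = mk [cl] := by
              rw [hY', ← hc1]; group
            calc (mk Y) ^ m * 1 * mk [cl] = (mk Y) ^ m * ((mk Y)⁻¹ * mk X'') := by rw [h5]; group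
            _ = (mk Y) ^ (m - 1) * mk X'' := by rw [zpow_sub_one]; group
        · have hz : x₁ = z := by
            have h6 := congrArg List.getLast? hX1eq
            rw [List.getLast?_concat, ← List.append_assoc, List.getLast?_concat] at h6
            exact Option.some.inj h6
          subst hz
          have hX'' : X'' = s' ++ t'' := by
            have h7 := hX1eq
            rw [← List.append_assoc] at h7
            exact List.append_cancel_right h7
          refine ⟨m, x₁ :: s', t'', by simp [hX''], ?_, ?_⟩
          · rw [hYeq]; simp
          · rw [hsplit, hf'eq]
            have h8 : mk (t'' ++ [x₁]) * mk [cl] = mk t'' := by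
              have h9 : (mk (t'' ++ [x₁]) : FreeGroup α) = mk t'' * mk [x₁] := (mul_mk).symm
              rw [h9, ← hc1]; group
            rw [mul_assoc, h8]
      · -- cl is not the flip of the first letter
        obtain ⟨Xp, xm, hXeq⟩ : ∃ Xp xm, (x₁ :: X'' : List (α × Bool)) = Xp ++ [xm] := by
          rcases eq_nil_or_concat' (x₁ :: X'') with h | ⟨Xp, xm, h⟩
          · exact absurd h (by simp)
          · exact ⟨Xp, xm, h⟩
        have hxm : (x₁ :: X'').getLast? = some xm := by rw [hXeq, List.getLast?_concat]
        by_cases hB : cl = xm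
        · -- right rotation case
          subst hB
          have hXrw : Reduced (Xp ++ [cl]) := by rw [← hXeq]; exact hX
          obtain ⟨hXp, -, hj⟩ := List.isChain_append.mp hXrw
          have key : mk [cl] * mk (x₁ :: X'') * (mk [cl])⁻¹ = mk (cl :: Xp) := by
            rw [hXeq]
            have h4 : (mk (Xp ++ [cl]) : FreeGroup α) = mk Xp * mk [cl] := (mul_mk).symm
            have h5 : (mk (cl :: Xp) : FreeGroup α) = mk [cl] * mk Xp := by rw [mul_mk]; rfl
            rw [h4, h5]; group
          have heq' : f' * mk (cl :: Xp) * f'⁻¹ = mk Y := by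
            rw [hsplit] at heq
            rw [← key]
            calc f' * (mk [cl] * mk (x₁ :: X'') * (mk [cl])⁻¹) * f'⁻¹
                = f' * mk [cl] * mk (x₁ :: X'') * (f' * mk [cl])⁻¹ := by group
            _ = mk Y := heq
          have hX1red : Reduced (cl :: Xp) := by
            rcases Xp with _ | ⟨y, T⟩
            · exact List.isChain_singleton cl
            · refine List.isChain_cons_cons.mpr ⟨?_, hXp⟩
              have hy : y = x₁ := by
                have := hXeq
                simp only [List.cons_append] at this
                exact (List.cons.injEq _ _ _ _ ▸ this : _ ∧ _).1.symm
              subst hy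
              exact hXc cl (by rw [hxm]; rfl) y (by simp)
          have hX1c : CycOk (cl :: Xp) := by
            intro yy hyy xx hxx
            simp only [List.head?_cons, Option.mem_def, Option.some.injEq] at hxx
            subst hxx
            rcases Xp with _ | ⟨y, T⟩
            · simp only [List.getLast?_singleton, Option.mem_def, Option.some.injEq] at hyy
              subst hyy; exact rw_self cl
            · rw [List.getLast?_cons_cons] at hyy
              exact hj yy hyy cl (by simp)
          obtain ⟨m, s', t', hX1eq, hYeq, hf'eq⟩ :=
            ih f' (cl :: Xp) Y hf'len hX1red (by simp) hX1c hY hYc heq'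
          rcases s' with _ | ⟨w, s''⟩
          · -- s' = []
            simp only [List.nil_append] at hX1eq
            refine ⟨m + 1, Xp, [cl], hXeq, ?_, ?_⟩
            · rw [hYeq, ← hX1eq]; simp
            · rw [hsplit, hf'eq]
              have hty : mk t' = mk Y := by rw [hYeq, ← hX1eq]; simp
              rw [hty, zpow_add_one]
          · -- s' = w :: s''
            have hw : cl = w := by
              have h6 := congrArg List.head? hX1eq
              simp only [List.head?_cons, List.cons_append] at h6
              exact Option.some.inj h6
            subst hw
            have hXp' : Xp = s'' ++ t' := by
              have h7 := hX1eq
              simp only [List.cons_append, List.cons.injEq] at h7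
              exact h7.2
            refine ⟨m, s'', t' ++ [cl], by rw [hXeq, hXp']; simp, ?_, ?_⟩
            · rw [hYeq]; simp
            · rw [hsplit, hf'eq, mul_assoc, mul_mk]
        · -- no-cancellation case: contradiction
          exfalso
          set w : List (α × Bool) := f.toWord ++ ((x₁ :: X'') ++ invRev f.toWord) with hwdef
          have hinvne : invRev f.toWord ≠ [] := by
            intro h
            have := invRev_length (L₁ := f.toWord)
            rw [h, hfw] at this
            simp at this
          have hmkw : mk w = mk Y := by
            rw [hwdef, ← mul_mk, ← mul_mk, mk_toWord]
            have h8 : (mk (invRev f.toWord) : FreeGroup α) = f⁻¹ := by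
              rw [← toWord_inv, mk_toWord]
            rw [h8, ← mul_assoc, heq]
          have hinvhead : (invRev f.toWord).head? = some (cl.1, !cl.2) := by
            show ((f.toWord.map fun g : α × Bool => (g.1, !g.2)).reverse).head? = _
            rw [List.head?_reverse, List.getLast?_map, hfw, List.getLast?_concat]
            rfl
          have hwred : Reduced w := by
            rw [hwdef, Reduced, List.Chain', List.isChain_append]
            refine ⟨hfr, ?_, ?_⟩
            · rw [List.isChain_append]
              refine ⟨hX, reduced_invRev hfr, ?_⟩
              intro z hz u hu
              rw [hxm] at hz
              rw [hinvhead] at hu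
              simp only [Option.mem_def, Option.some.injEq] at hz hu
              subst hz; subst hu
              intro hcon
              apply hB
              have := congrArg (fun p : α × Bool => (p.1, !p.2)) hcon
              simpa [flip_flip] using this
            · intro z hz u hu
              rw [hfw, List.getLast?_concat] at hz
              simp only [List.cons_append, List.head?_cons, Option.mem_def, Option.some.injEq] at hz hu
              subst hz; subst hu
              intro hcon
              exact hA (flip_eq.mpr hcon)
          have hwY : w = Y := by
            have h9 := congrArg toWord hmkw
            rwa [toWord_mk' hwred, toWord_mk' hY] at h9
          obtain ⟨f₁, fr, hfcons⟩ : ∃ a l, f.toWord = a :: l := by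
            rw [hfw]
            rcases fw' with _ | ⟨a, l⟩
            · exact ⟨cl, [], rfl⟩
            · exact ⟨a, l ++ [cl], rfl⟩
          have hheadY : Y.head? = some f₁ := by
            rw [← hwY, hwdef, hfcons]; simp [List.cons_append]
          have hlastY : Y.getLast? = some (f₁.1, !f₁.2) := by
            have h10 : ((x₁ :: X'') ++ invRev f.toWord) ≠ [] := by simp
            rw [← hwY, hwdef, List.getLast?_append_of_ne_nil (l₁ := f.toWord) h10,
              List.getLast?_append_of_ne_nil (l₁ := (x₁ :: X'')) hinvne]
            show ((f.toWord.map fun g : α × Bool => (g.1, !g.2)).reverse).getLast? = _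
            rw [List.getLast?_reverse, hfcons]
            rfl
          have hcon := hYc _ hlastY _ hheadY
          exact hcon (flip_flip f₁).symm

/-! ### Blocks -/

def pw (d c : α × Bool) : ℕ → List (α × Bool)
  | 0 => []
  | m + 1 => d :: c :: pw d c m

def Blk (c d : α × Bool) (m : ℕ) : List (α × Bool) := c :: c :: (pw d c m ++ [d, d])

lemma pw_snoc (d c : α × Bool) (m : ℕ) : pw d c (m + 1) = pw d c m ++ [d, c] := by
  induction m with
  | zero => rfl
  | succ m ih =>
    show d :: c :: pw d c (m + 1) = (d :: c :: pw d c m) ++ [d, c]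
    rw [ih]; simp

lemma pw_head (d c : α × Bool) (m : ℕ) : ∃ r, pw d c m ++ [d, d] = d :: r := by
  cases m with
  | zero => exact ⟨[d], rfl⟩
  | succ m => exact ⟨c :: pw d c m ++ [d, d], by simp [pw]⟩

lemma blk_ne_nil (c d : α × Bool) (m : ℕ) : Blk c d m ≠ [] := by simp [Blk]

lemma blk_head4 (c d : α × Bool) (m : ℕ) (hm : 1 ≤ m) :
    ∃ r, Blk c d m = c :: c :: d :: c :: r := by
  obtain ⟨m', rfl⟩ : ∃ m', m = m' + 1 := ⟨m - 1, by omega⟩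
  exact ⟨pw d c m' ++ [d, d], by simp [Blk, pw]⟩

lemma rw_cd {c d : α × Bool} (hcd : c.1 ≠ d.1) : RW c d := fun h => hcd (by rw [h])
lemma rw_dc {c d : α × Bool} (hcd : c.1 ≠ d.1) : RW d c := fun h => hcd.symm (by rw [h])

lemma chain'_pw_aux {c d : α × Bool} (hcd : c.1 ≠ d.1) (m : ℕ) :
    List.Chain' RW (c :: pw d c m ++ [d, d]) := by
  induction m with
  | zero =>
    exact List.isChain_cons_cons.mpr ⟨rw_cd hcd, List.isChain_cons_cons.mpr ⟨rw_self d, List.isChain_singleton d⟩⟩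
  | succ m ih =>
    rw [pw]
    exact List.isChain_cons_cons.mpr ⟨rw_cd hcd, List.isChain_cons_cons.mpr ⟨rw_dc hcd, ih⟩⟩

lemma reduced_blk {c d : α × Bool} (hcd : c.1 ≠ d.1) (m : ℕ) : Reduced (Blk c d m) := by
  rw [Blk, Reduced]
  exact List.isChain_cons_cons.mpr ⟨rw_self c, chain'_pw_aux hcd m⟩

lemma blk_getLast (c d : α × Bool) (m : ℕ) : (Blk c d m).getLast? = some d := by
  have h : Blk c d m = (c :: c :: pw d c m ++ [d]) ++ [d] := by simp [Blk]
  rw [h, List.getLast?_concat]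

lemma blk_head (c d : α × Bool) (m : ℕ) : (Blk c d m).head? = some c := rfl

lemma map_flip_pw (d c : α × Bool) (m : ℕ) :
    (pw d c m).map (fun g : α × Bool => (g.1, !g.2)) = pw (d.1, !d.2) (c.1, !c.2) m := by
  induction m with
  | zero => rfl
  | succ m ih => simp [pw, ih]

lemma reverse_pw (d c : α × Bool) (m : ℕ) : (pw d c m).reverse = pw c d m := by
  induction m with
  | zero => rfl
  | succ m ih =>
    rw [pw_snoc, List.reverse_append, ih]
    show [c, d] ++ pw c d m = pw c d (m + 1)
    rfl

lemma invRev_blk (c d : α × Bool) (m : ℕ) :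
    invRev (Blk c d m) = Blk (d.1, !d.2) (c.1, !c.2) m := by
  show ((Blk c d m).map fun g : α × Bool => (g.1, !g.2)).reverse = _
  rw [Blk]
  simp only [List.map_cons, List.map_append, map_flip_pw]
  rw [List.reverse_cons, List.reverse_cons, List.reverse_append, reverse_pw]
  simp [Blk, pw_snoc]

/-! ### Scanning: block boundaries are intrinsic -/

def Pat (l : List (α × Bool)) : Prop :=
  ∃ z₀ z₁ z₂ z₃ r, l = z₀ :: z₁ :: z₂ :: z₃ :: r ∧ z₀ = z₁ ∧ z₁ ≠ z₂ ∧ z₂ ≠ z₃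

def GoodTail (Q : List (α × Bool)) : Prop := Q = [] ∨ ∃ e y r, Q = e :: e :: y :: r

def IsBlock (b : List (α × Bool)) : Prop :=
  ∃ c d m, b = Blk c d m ∧ c.1 ≠ d.1 ∧ 1 ≤ m

lemma goodTail_flatten (bs : List (List (α × Bool))) (h : ∀ b ∈ bs, IsBlock b) :
    GoodTail bs.flatten := by
  cases bs with
  | nil => exact Or.inl rfl
  | cons b bs' =>
    obtain ⟨c, d, m, rfl, hcd, hm⟩ := h b (by simp)
    obtain ⟨r, hr⟩ := blk_head4 c d m hm
    right
    exact ⟨c, d, c :: r ++ bs'.flatten, by simp [hr]⟩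

lemma inner2 {c d : α × Bool} (hcd : c ≠ d) :
    ∀ (m : ℕ) (P' c' Q : List (α × Bool)), P' ++ c' = pw d c m ++ [d, d] → c' ≠ [] →
      GoodTail Q → ¬ Pat (c' ++ Q) := by
  intro m
  induction m with
  | zero =>
    intro P' c' Q hsplit hne hQ hpat
    obtain ⟨z0, z1, z2, z3, r, heq, h01, h12, h23⟩ := hpat
    rcases P' with _ | ⟨x, _ | ⟨y, P''⟩⟩
    · -- c' = [d, d]
      simp only [List.nil_append, pw] at hsplit
      subst hsplit
      rcases hQ with rfl | ⟨e, y, r', rfl⟩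
      · simp [pw] at heq
      · simp only [pw, List.nil_append, List.cons_append, List.cons.injEq] at heq
        obtain ⟨he0, he1, he2, he3, -⟩ := heq
        rw [← he2, ← he3] at h23
        exact h23 rfl
    · -- P' = [x], c' = [d]
      simp only [pw, List.nil_append, List.cons_append, List.cons.injEq] at hsplit
      obtain ⟨-, hc'⟩ := hsplit
      subst hc'
      rcases hQ with rfl | ⟨e, y, r', rfl⟩
      · simp at heq
      · simp only [List.cons_append, List.nil_append, List.cons.injEq] at heq
        obtain ⟨-, he1, he2, -⟩ := heq
        rw [← he1, ← he2] at h12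
        exact h12 rfl
    · -- too long
      simp only [pw, List.nil_append, List.cons_append, List.cons.injEq] at hsplit
      obtain ⟨-, -, hsplit'⟩ := hsplit
      exact hne (List.append_eq_nil_iff.mp hsplit').2
  | succ m ih =>
    intro P' c' Q hsplit hne hQ hpat
    have hpw : pw d c (m + 1) ++ [d, d] = d :: c :: (pw d c m ++ [d, d]) := by simp [pw]
    rw [hpw] at hsplit
    rcases P' with _ | ⟨x, _ | ⟨y, P''⟩⟩
    · simp only [List.nil_append] at hsplit
      subst hsplit
      obtain ⟨z0, z1, z2, z3, r, heq, h01, h12, h23⟩ := hpat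
      simp only [List.cons_append, List.cons.injEq] at heq
      obtain ⟨he0, he1, -⟩ := heq
      rw [← he0, ← he1] at h01
      exact hcd h01.symm
    · simp only [List.cons_append, List.cons.injEq] at hsplit
      obtain ⟨-, hc'⟩ := hsplit
      subst hc'
      obtain ⟨z0, z1, z2, z3, r, heq, h01, h12, h23⟩ := hpat
      obtain ⟨r', hr'⟩ := pw_head d c m
      rw [hr'] at heq
      simp only [List.cons_append, List.cons.injEq] at heq
      obtain ⟨he0, he1, -⟩ := heq
      rw [← he0, ← he1] at h01
      exact hcd h01
    · simp only [List.cons_append, List.cons.injEq] at hsplit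
      obtain ⟨-, -, hsplit'⟩ := hsplit
      exact ih P'' c' Q hsplit' hne hQ hpat

lemma inner1 {c d : α × Bool} (hcd : c ≠ d) (m : ℕ) (P c' Q : List (α × Bool))
    (hsplit : P ++ c' = Blk c d m) (hPne : P ≠ []) (hne : c' ≠ []) (hQ : GoodTail Q) :
    ¬ Pat (c' ++ Q) := by
  rw [Blk] at hsplit
  rcases P with _ | ⟨x, _ | ⟨y, P''⟩⟩
  · exact absurd rfl hPne
  · simp only [List.cons_append, List.cons.injEq] at hsplit
    obtain ⟨-, hc'⟩ := hsplit
    subst hc'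
    intro hpat
    obtain ⟨z0, z1, z2, z3, r, heq, h01, h12, h23⟩ := hpat
    obtain ⟨r', hr'⟩ := pw_head d c m
    rw [hr'] at heq
    simp only [List.cons_append, List.cons.injEq] at heq
    obtain ⟨he0, he1, -⟩ := heq
    rw [← he0, ← he1] at h01
    exact hcd h01
  · simp only [List.cons_append, List.cons.injEq] at hsplit
    obtain ⟨-, -, hsplit'⟩ := hsplit
    exact inner2 hcd m P'' c' Q hsplit' hne hQ

lemma scan : ∀ (bs : List (List (α × Bool))), (∀ b ∈ bs, IsBlock b) →
    ∀ P Q, bs.flatten = P ++ Q → Pat Q →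
    ∃ b1 b2, bs = b1 ++ b2 ∧ P = b1.flatten := by
  intro bs
  induction bs with
  | nil =>
    intro _ P Q hflat hpat
    obtain ⟨z0, z1, z2, z3, r, heq, -, -, -⟩ := hpat
    rw [heq] at hflat
    have := congrArg List.length hflat
    simp at this
  | cons b bs' ih =>
    intro hblocks P Q hflat hpat
    obtain ⟨c, d, m, hb, hcd, hm⟩ := hblocks b (by simp)
    have hflat' : b ++ bs'.flatten = P ++ Q := by simpa using hflat
    rcases List.append_eq_append_iff.mp hflat' with ⟨a', hP, hrest⟩ | ⟨c', hb', hQ⟩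
    · obtain ⟨b1, b2, hbs, hPa⟩ := ih (fun x hx => hblocks x (by simp [hx])) a' Q hrest hpat
      exact ⟨b :: b1, b2, by simp [hbs], by simp [hP, hPa]⟩
    · rcases eq_or_ne P [] with rfl | hPne
      · exact ⟨[], b :: bs', rfl, rfl⟩
      rcases eq_or_ne c' [] with rfl | hcne
      · refine ⟨[b], bs', rfl, ?_⟩
        simp only [List.append_nil] at hb'
        simp [← hb']
      · exfalso
        have hcd' : c ≠ d := fun h => hcd (by rw [h])
        refine inner1 hcd' m P c' bs'.flatten ?_ hPne hcne
          (goodTail_flatten bs' (fun x hx => hblocks x (by simp [hx]))) ?_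
        · rw [← hb', hb]
        · rw [← hQ]; exact hpat

/-! ### Alignment -/

lemma pw_strip {c d : α × Bool} (hcd : c ≠ d) :
    ∀ (m1 m2 : ℕ) (R1 R2 : List (α × Bool)),
      pw d c m1 ++ (d :: d :: R1) = pw d c m2 ++ (d :: d :: R2) → m1 = m2 := by
  intro m1
  induction m1 with
  | zero =>
    intro m2 R1 R2 h
    cases m2 with
    | zero => rfl
    | succ m2 =>
      exfalso
      simp only [pw, List.nil_append, List.cons_append, List.cons.injEq] at h
      exact hcd h.2.1.symm
  | succ m1 ih =>
    intro m2 R1 R2 h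
    cases m2 with
    | zero =>
      exfalso
      simp only [pw, List.nil_append, List.cons_append, List.cons.injEq] at h
      exact hcd h.2.1
    | succ m2 =>
      simp only [pw, List.cons_append, List.cons.injEq] at h
      rw [ih m2 R1 R2 h.2.2]

lemma blk_align {c d c' d' : α × Bool} (hcd : c ≠ d) {m1 m2 : ℕ} (hm1 : 1 ≤ m1) (hm2 : 1 ≤ m2)
    {R1 R2 : List (α × Bool)} (h : Blk c d m1 ++ R1 = Blk c' d' m2 ++ R2) :
    c = c' ∧ d = d' ∧ m1 = m2 := by
  obtain ⟨r1, h1⟩ := blk_head4 c d m1 hm1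
  obtain ⟨r2, h2⟩ := blk_head4 c' d' m2 hm2
  have h' := h
  rw [h1, h2] at h'
  simp only [List.cons_append, List.cons.injEq] at h'
  obtain ⟨hc, -, hd, -, -⟩ := h'
  subst hc; subst hd
  refine ⟨rfl, rfl, ?_⟩
  have h'' : pw d c m1 ++ (d :: d :: R1) = pw d c m2 ++ (d :: d :: R2) := by
    have h3 := h
    rw [Blk, Blk] at h3
    simp only [List.cons_append, List.cons.injEq, List.append_assoc] at h3
    have := h3.2.2
    simpa using this
  exact pw_strip hcd m1 m2 R1 R2 h''

/-! ### Symbols -/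

def cOf (a0 a1 : α) (s : Fin 2 × Bool) : α × Bool :=
  if s.1 = 0 then (if s.2 then (a0, true) else (a1, false))
  else (if s.2 then (a1, true) else (a0, false))

def dOf (a0 a1 : α) (s : Fin 2 × Bool) : α × Bool :=
  if s.1 = 0 then (if s.2 then (a1, true) else (a0, false))
  else (if s.2 then (a0, true) else (a1, false))

def sblk (a0 a1 : α) (mi : ℕ) (s : Fin 2 × Bool) : List (α × Bool) :=
  Blk (cOf a0 a1 s) (dOf a0 a1 s) mi

section Symbols
variable {a0 a1 : α}

lemma cd_ne (h01 : a0 ≠ a1) (s : Fin 2 × Bool) : (cOf a0 a1 s).1 ≠ (dOf a0 a1 s).1 := by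
  rcases s with ⟨g, b⟩
  fin_cases g <;> cases b <;> simp [cOf, dOf] <;> first | exact h01 | exact h01.symm

lemma junction (h01 : a0 ≠ a1) (s t : Fin 2 × Bool) (hst : t ≠ (s.1, !s.2)) :
    RW (dOf a0 a1 s) (cOf a0 a1 t) := by
  rcases s with ⟨gs, bs⟩
  rcases t with ⟨gt, bt⟩
  fin_cases gs <;> fin_cases gt <;> cases bs <;> cases bt <;>
    simp_all [cOf, dOf, RW, Prod.ext_iff] <;> tauto

lemma flip_cd (s : Fin 2 × Bool) :
    ((dOf a0 a1 s).1, !(dOf a0 a1 s).2) = cOf a0 a1 (s.1, !s.2) ∧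
    ((cOf a0 a1 s).1, !(cOf a0 a1 s).2) = dOf a0 a1 (s.1, !s.2) := by
  rcases s with ⟨g, b⟩
  fin_cases g <;> cases b <;> simp [cOf, dOf]

lemma invRev_sblk (mi : ℕ) (s : Fin 2 × Bool) :
    invRev (sblk a0 a1 mi s) = sblk a0 a1 mi (s.1, !s.2) := by
  rw [sblk, invRev_blk, (flip_cd s).1, (flip_cd s).2]; rfl

end Symbols

/-! ### Concatenation of blocks -/

def cat (a0 a1 : α) (mi : ℕ) (l : List (Fin 2 × Bool)) : List (α × Bool) :=
  (l.map (sblk a0 a1 mi)).flatten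

section Cat
variable {a0 a1 : α}

lemma cat_nil (mi : ℕ) : cat a0 a1 mi [] = [] := rfl

lemma cat_cons (mi : ℕ) (s : Fin 2 × Bool) (l : List (Fin 2 × Bool)) :
    cat a0 a1 mi (s :: l) = sblk a0 a1 mi s ++ cat a0 a1 mi l := by
  simp [cat]

lemma cat_append (mi : ℕ) (l1 l2 : List (Fin 2 × Bool)) :
    cat a0 a1 mi (l1 ++ l2) = cat a0 a1 mi l1 ++ cat a0 a1 mi l2 := by
  simp [cat]

lemma sblk_ne_nil (mi : ℕ) (s : Fin 2 × Bool) : sblk a0 a1 mi s ≠ [] := blk_ne_nil _ _ _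

lemma cat_ne_nil (mi : ℕ) {l : List (Fin 2 × Bool)} (hl : l ≠ []) : cat a0 a1 mi l ≠ [] := by
  cases l with
  | nil => exact absurd rfl hl
  | cons s l' =>
    rw [cat_cons]
    intro h
    exact sblk_ne_nil mi s (List.append_eq_nil_iff.mp h).1

lemma cat_head (mi : ℕ) (s : Fin 2 × Bool) (l : List (Fin 2 × Bool)) :
    (cat a0 a1 mi (s :: l)).head? = some (cOf a0 a1 s) := by
  rw [cat_cons, List.head?_append_of_ne_nil _ (sblk_ne_nil mi s)]
  exact blk_head _ _ _

lemma cat_getLast (mi : ℕ) (s : Fin 2 × Bool) (l : List (Fin 2 × Bool)) :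
    (cat a0 a1 mi (l ++ [s])).getLast? = some (dOf a0 a1 s) := by
  rw [cat_append, List.getLast?_append_of_ne_nil (l₁ := cat a0 a1 mi l) (cat_ne_nil mi (by simp))]
  rw [cat_cons, cat_nil, List.append_nil]
  exact blk_getLast _ _ _

lemma reduced_cat (h01 : a0 ≠ a1) (mi : ℕ) {l : List (Fin 2 × Bool)} (hl : Reduced l) :
    Reduced (cat a0 a1 mi l) := by
  induction l with
  | nil => exact List.isChain_nil
  | cons s l' ih =>
    rw [cat_cons, Reduced, List.Chain', List.isChain_append]
    refine ⟨reduced_blk (cd_ne h01 s) mi, ih hl.tail, ?_⟩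
    intro y hy x hx
    rw [sblk, blk_getLast] at hy
    simp only [Option.mem_def, Option.some.injEq] at hy
    subst hy
    cases l' with
    | nil => rw [cat_nil] at hx; simp at hx
    | cons t l'' =>
      rw [cat_head] at hx
      simp only [Option.mem_def, Option.some.injEq] at hx
      subst hx
      exact junction h01 s t ((List.isChain_cons_cons.mp hl).1)

lemma cycok_cat (h01 : a0 ≠ a1) (mi : ℕ) {l : List (Fin 2 × Bool)} (hl : CycOk l) :
    CycOk (cat a0 a1 mi l) := by
  cases l with
  | nil => intro y hy x hx; rw [cat_nil] at hy; simp at hy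
  | cons s0 l' =>
    rcases eq_nil_or_concat' (s0 :: l') with h | ⟨L, sl, hL⟩
    · simp at h
    · intro y hy x hx
      rw [hL, cat_getLast] at hy
      rw [cat_head] at hx
      simp only [Option.mem_def, Option.some.injEq] at hy hx
      subst hy; subst hx
      have hsym : RW sl s0 := by
        refine hl sl ?_ s0 ?_
        · rw [hL, List.getLast?_concat]; rfl
        · simp
      exact junction h01 sl s0 hsym

lemma isblock_cat (h01 : a0 ≠ a1) (mi : ℕ) (hm : 1 ≤ mi) (l : List (Fin 2 × Bool)) :
    ∀ b ∈ l.map (sblk a0 a1 mi), IsBlock b := by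
  intro b hb
  obtain ⟨s, -, rfl⟩ := List.mem_map.mp hb
  exact ⟨cOf a0 a1 s, dOf a0 a1 s, mi, rfl, cd_ne h01 s, hm⟩

lemma pat_cat (h01 : a0 ≠ a1) (mi : ℕ) (hm : 1 ≤ mi) {l : List (Fin 2 × Bool)} (hl : l ≠ [])
    (E : List (α × Bool)) : Pat (cat a0 a1 mi l ++ E) := by
  cases l with
  | nil => exact absurd rfl hl
  | cons s l' =>
    obtain ⟨r, hr⟩ := blk_head4 (cOf a0 a1 s) (dOf a0 a1 s) mi hm
    rw [cat_cons, sblk, hr]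
    have hne : cOf a0 a1 s ≠ dOf a0 a1 s := fun h => cd_ne h01 s (by rw [h])
    exact ⟨cOf a0 a1 s, cOf a0 a1 s, dOf a0 a1 s, cOf a0 a1 s, r ++ (cat a0 a1 mi l' ++ E),
      by simp, rfl, hne, fun h => hne h.symm⟩

lemma cat_align (h01 : a0 ≠ a1) {m1 m2 : ℕ} (hm1 : 1 ≤ m1) (hm2 : 1 ≤ m2)
    {s t : List (Fin 2 × Bool)} (hs : s ≠ [])
    (h : cat a0 a1 m1 s = cat a0 a1 m2 t) : m1 = m2 := by
  cases s with
  | nil => exact absurd rfl hs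
  | cons σ s' =>
    cases t with
    | nil =>
      exfalso
      rw [cat_nil] at h
      exact cat_ne_nil m1 (l := σ :: s') (by simp) h
    | cons τ t' =>
      rw [cat_cons, cat_cons] at h
      exact (blk_align (fun hh => cd_ne h01 σ (by rw [hh])) hm1 hm2 h).2.2

end Cat

/-! ### Cyclic reduction in a free group -/

lemma cyc {β : Type*} [DecidableEq β] :
    ∀ (N : ℕ) (w : FreeGroup β), w.toWord.length ≤ N →
      ∃ h v, w = h * v * h⁻¹ ∧ CycOk v.toWord := by
  intro N
  induction N with
  | zero =>
    intro w hlen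
    refine ⟨1, w, by group, ?_⟩
    have : w.toWord = [] := List.eq_nil_of_length_eq_zero (Nat.le_zero.mp hlen)
    rw [this]
    intro y hy x hx
    simp at hy
  | succ N ih =>
    intro w hlen
    by_cases hc : CycOk w.toWord
    · exact ⟨1, w, by group, hc⟩
    · simp only [CycOk, not_forall] at hc
      obtain ⟨y, hy, x, hx, hrw⟩ := hc
      have hxy : x = (y.1, !y.2) := not_not.mp hrw
      obtain ⟨x₀, l', hl⟩ : ∃ x₀ l', w.toWord = x₀ :: l' := by
        cases h : w.toWord with
        | nil => rw [h] at hy; simp at hy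
        | cons a l => exact ⟨a, l, rfl⟩
      have hx0 : x = x₀ := by
        rw [hl] at hx; exact (by simpa using hx : x₀ = x).symm
      subst hx0
      rcases eq_nil_or_concat' l' with rfl | ⟨mid, yl, rfl⟩
      · -- single letter: impossible
        exfalso
        rw [hl] at hy
        simp only [List.getLast?_singleton, Option.mem_def, Option.some.injEq] at hy
        subst hy
        rcases x with ⟨a, b⟩
        simp [Prod.ext_iff] at hxy
      · have hyl : y = yl := by
          rw [hl] at hy
          rw [show (x :: (mid ++ [yl]) : List (β × Bool)) = (x :: mid) ++ [yl] by simp,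
            List.getLast?_concat] at hy
          exact (by simpa using hy : yl = y).symm
        subst hyl
        have hred : Reduced w.toWord := reduced_toWord w
        have hmidred : Reduced mid := by
          rw [hl] at hred
          have h1 : List.Chain' RW (mid ++ [y]) := (List.isChain_cons.mp hred).2
          exact (List.isChain_append.mp h1).1
        have hmidword : (mk mid).toWord = mid := toWord_mk' hmidred
        have hmidlen : (mk mid).toWord.length ≤ N := by
          have := hlen
          rw [hl] at this
          simp at this
          rw [hmidword]
          omega
        obtain ⟨h, v, hw', hcyc⟩ := ih (mk mid) hmidlen
        refine ⟨mk [x] * h, v, ?_, hcyc⟩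
        have hinv : (mk [x] : FreeGroup β)⁻¹ = mk [y] := by
          rw [mk_singleton_inv, hxy]; simp
        have hw : w = mk [x] * mk mid * (mk [x])⁻¹ := by
          conv_lhs => rw [← mk_toWord (x := w), hl]
          rw [hinv]
          rw [show (x :: (mid ++ [y]) : List (β × Bool)) = [x] ++ mid ++ [y] by simp]
          rw [← mul_mk, ← mul_mk]
        rw [hw, hw']
        group

/-! ### The homomorphisms -/

def phi (a0 a1 : α) (mi : ℕ) : FreeGroup (Fin 2) →* FreeGroup α :=
  FreeGroup.lift (fun g : Fin 2 => mk (sblk a0 a1 mi (g, true)))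

section Phi
variable {a0 a1 : α}

lemma phi_mk (mi : ℕ) (l : List (Fin 2 × Bool)) :
    phi a0 a1 mi (mk l) = mk (cat a0 a1 mi l) := by
  induction l with
  | nil =>
    rw [cat_nil, ← one_eq_mk]
    exact (phi a0 a1 mi).map_one
  | cons x l' ih =>
    have hsplit : (mk (x :: l') : FreeGroup (Fin 2)) = mk [x] * mk l' := by
      rw [mul_mk]; rfl
    rw [hsplit, (phi a0 a1 mi).map_mul, ih, cat_cons, ← mul_mk]
    congr 1
    rcases x with ⟨g, b⟩
    cases b
    · have h1 : (mk [(g, false)] : FreeGroup (Fin 2)) = (FreeGroup.of g)⁻¹ := by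
        rw [show (FreeGroup.of g : FreeGroup (Fin 2)) = mk [(g, true)] from rfl, inv_mk]
        simp [invRev]
      rw [h1, (phi a0 a1 mi).map_inv]
      rw [show phi a0 a1 mi (FreeGroup.of g) = mk (sblk a0 a1 mi (g, true)) from
        FreeGroup.lift_apply_of]
      rw [inv_mk, invRev_sblk]
      rfl
    · exact (show phi a0 a1 mi (FreeGroup.of g) = mk (sblk a0 a1 mi (g, true)) from
        FreeGroup.lift_apply_of)

lemma phi_eq_mk_cat (mi : ℕ) (w : FreeGroup (Fin 2)) :
    phi a0 a1 mi w = mk (cat a0 a1 mi w.toWord) := by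
  conv_lhs => rw [← mk_toWord (x := w)]
  exact phi_mk mi _

lemma phi_injective (h01 : a0 ≠ a1) (mi : ℕ) : Function.Injective (phi a0 a1 mi) := by
  rw [injective_iff_map_eq_one]
  intro w hw
  rw [phi_eq_mk_cat] at hw
  have h1 : cat a0 a1 mi w.toWord = [] := by
    have := congrArg toWord hw
    rwa [toWord_mk' (reduced_cat h01 mi (reduced_toWord w)), toWord_one] at this
  by_contra hne
  exact cat_ne_nil mi (fun h => hne (toWord_eq_nil_iff.mp h)) h1

end Phi

/-! ### Main malnormality core -/

lemma main_core {a0 a1 : α} (h01 : a0 ≠ a1) {m1 m2 : ℕ} (hm1 : 1 ≤ m1) (hm2 : 1 ≤ m2)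
    (g x : FreeGroup α) (hx : x ∈ (phi a0 a1 m1).range) (hx1 : x ≠ 1)
    (hy : g * x * g⁻¹ ∈ (phi a0 a1 m2).range) :
    m1 = m2 ∧ g ∈ (phi a0 a1 m1).range := by
  obtain ⟨wx, hwx⟩ := hx
  obtain ⟨wy, hwy⟩ := hy
  obtain ⟨h, v, hwxd, hcycs⟩ := cyc wx.toWord.length wx le_rfl
  obtain ⟨h', v', hwyd, hcyct⟩ := cyc wy.toWord.length wy le_rfl
  set s := v.toWord with hs
  set t := v'.toWord with ht
  have hsne : s ≠ [] := by
    intro h0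
    apply hx1
    have hv1 : v = 1 := toWord_eq_nil_iff.mp h0
    rw [← hwx, hwxd, hv1]
    simp
  have htne : t ≠ [] := by
    intro h0
    have hv1 : v' = 1 := toWord_eq_nil_iff.mp h0
    have hgx : g * x * g⁻¹ = 1 := by rw [← hwy, hwyd, hv1]; simp
    apply hx1
    have h2 := congrArg (fun z => g⁻¹ * z * g) hgx
    simpa [mul_assoc] using h2
  set f := (phi a0 a1 m2 h')⁻¹ * g * (phi a0 a1 m1 h) with hf
  have heqf : f * mk (cat a0 a1 m1 s) * f⁻¹ = mk (cat a0 a1 m2 t) := by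
    have e1 : phi a0 a1 m1 v = mk (cat a0 a1 m1 s) := phi_eq_mk_cat m1 v
    have e2 : phi a0 a1 m2 v' = mk (cat a0 a1 m2 t) := phi_eq_mk_cat m2 v'
    have e3 : g * phi a0 a1 m1 wx * g⁻¹ = phi a0 a1 m2 wy := by rw [hwx, hwy]
    rw [hwxd, hwyd] at e3
    simp only [_root_.map_mul, _root_.map_inv] at e3
    rw [← e1, ← e2, hf]
    calc (phi a0 a1 m2 h')⁻¹ * g * phi a0 a1 m1 h * phi a0 a1 m1 v *
          ((phi a0 a1 m2 h')⁻¹ * g * phi a0 a1 m1 h)⁻¹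
        = (phi a0 a1 m2 h')⁻¹ *
            (g * (phi a0 a1 m1 h * phi a0 a1 m1 v * (phi a0 a1 m1 h)⁻¹) * g⁻¹) *
            phi a0 a1 m2 h' := by group
      _ = (phi a0 a1 m2 h')⁻¹ * (phi a0 a1 m2 h' * phi a0 a1 m2 v' * (phi a0 a1 m2 h')⁻¹) *
            phi a0 a1 m2 h' := by rw [e3]
      _ = phi a0 a1 m2 v' := by group
  obtain ⟨mz, d, e, hXde, hYed, hfeq⟩ :=
    statA f.toWord.length f (cat a0 a1 m1 s) (cat a0 a1 m2 t) le_rfl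
      (reduced_cat h01 m1 (reduced_toWord v)) (cat_ne_nil m1 hsne) (cycok_cat h01 m1 hcycs)
      (reduced_cat h01 m2 (reduced_toWord v')) (cycok_cat h01 m2 hcyct) heqf
  have hflat : ((s ++ s).map (sblk a0 a1 m1)).flatten = d ++ (cat a0 a1 m2 t ++ e) := by
    show cat a0 a1 m1 (s ++ s) = _
    rw [cat_append, hXde, hYed]
    simp
  obtain ⟨b1, b2, hb12, hdb⟩ := scan _ (isblock_cat h01 m1 hm1 (s ++ s)) d _ hflat
      (pat_cat h01 m2 hm2 htne e)
  obtain ⟨S₁, S₂, hS, hmap1, hmap2⟩ := List.map_eq_append_iff.mp hb12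
  have hdS : d = cat a0 a1 m1 S₁ := by rw [hdb, ← hmap1]; rfl
  have hkey : m1 = m2 ∧ mk e ∈ (phi a0 a1 m1).range := by
    rcases List.append_eq_append_iff.mp hS with ⟨a', hS1, -⟩ | ⟨c', hsplit, -⟩
    · -- S₁ = s ++ a' : forces e = []
      have hd2 : cat a0 a1 m1 S₁ = (d ++ e) ++ cat a0 a1 m1 a' := by
        rw [hS1, cat_append, hXde]
      have hd3 : d = (d ++ e) ++ cat a0 a1 m1 a' := hdS.trans hd2
      have hlen := congrArg List.length hd3
      simp only [List.length_append] at hlen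
      have he : e = [] := List.eq_nil_of_length_eq_zero (by omega)
      have hde : cat a0 a1 m2 t = cat a0 a1 m1 s := by
        rw [hYed, hXde, he]
        simp
      refine ⟨(cat_align h01 hm2 hm1 htne hde).symm, ?_⟩
      rw [he, ← one_eq_mk]
      exact one_mem _
    · -- s = S₁ ++ c'
      have he : e = cat a0 a1 m1 c' := by
        have h2 : cat a0 a1 m1 s = d ++ cat a0 a1 m1 c' := by
          rw [hsplit, cat_append, hdS]
        rw [hXde] at h2
        exact List.append_cancel_left h2
      have hde : cat a0 a1 m2 t = cat a0 a1 m1 (c' ++ S₁) := by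
        rw [hYed, cat_append, ← he, ← hdS]
      refine ⟨(cat_align h01 hm2 hm1 htne hde).symm, ?_⟩
      exact ⟨mk c', by rw [phi_mk, he]⟩
  obtain ⟨hm, hmke⟩ := hkey
  subst hm
  refine ⟨rfl, ?_⟩
  have hfmem : f ∈ (phi a0 a1 m1).range := by
    rw [hfeq]
    refine mul_mem (zpow_mem ?_ mz) hmke
    exact ⟨mk t, by rw [phi_mk]⟩
  have hg : g = phi a0 a1 m1 h' * f * (phi a0 a1 m1 h)⁻¹ := by
    rw [hf]; group
  rw [hg]
  exact mul_mem (mul_mem ⟨h', rfl⟩ hfmem) (inv_mem ⟨h, rfl⟩)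

/-! ### Infinite index -/

lemma c_mem_blk (c d : α × Bool) (m : ℕ) : c ∈ Blk c d m := by simp [Blk]
lemma d_mem_blk (c d : α × Bool) (m : ℕ) : d ∈ Blk c d m := by simp [Blk]

lemma a1_mem_sblk (a0 a1 : α) (mi : ℕ) (s : Fin 2 × Bool) :
    ∃ ℓ ∈ sblk a0 a1 mi s, ℓ.1 = a1 := by
  rcases s with ⟨g, b⟩
  fin_cases g <;> cases b
  · exact ⟨cOf a0 a1 (0, false), c_mem_blk _ _ _, by simp [cOf]⟩
  · exact ⟨dOf a0 a1 (0, true), d_mem_blk _ _ _, by simp [dOf]⟩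
  · exact ⟨dOf a0 a1 (1, false), d_mem_blk _ _ _, by simp [dOf]⟩
  · exact ⟨cOf a0 a1 (1, true), c_mem_blk _ _ _, by simp [cOf]⟩

lemma pow_not_mem {a0 a1 : α} (h01 : a0 ≠ a1) (mi : ℕ) (p : ℕ) (hp : 0 < p) :
    FreeGroup.of a0 ^ p ∉ (phi a0 a1 mi).range := by
  rintro ⟨w, hw⟩
  have h1 : cat a0 a1 mi w.toWord = List.replicate p (a0, true) := by
    have h2 := congrArg toWord hw
    rwa [phi_eq_mk_cat, toWord_mk' (reduced_cat h01 mi (reduced_toWord w)),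
      toWord_of_pow] at h2
  rcases hl : w.toWord with _ | ⟨σ, rest⟩
  · rw [hl, cat_nil] at h1
    have h3 := congrArg List.length h1
    simp at h3
    omega
  · rw [hl] at h1
    obtain ⟨ℓ, hmem, hℓ⟩ := a1_mem_sblk a0 a1 mi σ
    have hmem2 : ℓ ∈ cat a0 a1 mi (σ :: rest) := by
      rw [cat_cons]; exact List.mem_append_left _ hmem
    rw [h1] at hmem2
    have h4 := List.eq_of_mem_replicate hmem2
    rw [h4] at hℓ
    exact h01 hℓ

lemma index_zero {a0 a1 : α} (h01 : a0 ≠ a1) (mi : ℕ) :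
    ((phi a0 a1 mi).range).index = 0 := by
  have key : ∀ p q : ℕ, p < q →
      (FreeGroup.of a0 ^ p)⁻¹ * FreeGroup.of a0 ^ q ∉ (phi a0 a1 mi).range := by
    intro p q hpq hmem
    have hq : (FreeGroup.of a0 : FreeGroup α) ^ q =
        FreeGroup.of a0 ^ p * FreeGroup.of a0 ^ (q - p) := by
      rw [← pow_add]; congr 1; omega
    rw [hq, ← mul_assoc, inv_mul_cancel, one_mul] at hmem
    exact pow_not_mem h01 mi (q - p) (by omega) hmem
  have hinf : Infinite (FreeGroup α ⧸ (phi a0 a1 mi).range) := by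
    refine Infinite.of_injective
      (fun p : ℕ => QuotientGroup.mk (s := (phi a0 a1 mi).range) (FreeGroup.of a0 ^ p)) ?_
    intro p q hpq
    have hm := QuotientGroup.eq.mp hpq
    rcases lt_trichotomy p q with hlt | heq | hgt
    · exact absurd hm (key p q hlt)
    · exact heq
    · exfalso
      have hm' := inv_mem hm
      rw [mul_inv_rev, inv_inv] at hm'
      exact key q p hgt hm'
  rw [Subgroup.index_eq_card]
  exact @Nat.card_eq_zero_of_infinite _ hinf

end Mal


/-- Lemma 3.9 (free case): a free group of rank `n ≥ 2` contains, for every `k`, a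
malnormal collection of `k` subgroups, each free of rank 2 and of infinite index. -/
theorem exists_malnormal_collection_of_free (n : ℕ) (hn : 2 ≤ n) (k : ℕ) :
    ∃ H : Fin k → Subgroup (FreeGroup (Fin n)),
      IsMalnormalCollection H ∧
      ∀ i : Fin k,
        (∃ ψ : FreeGroup (Fin 2) →* FreeGroup (Fin n),
          Function.Injective ψ ∧ ψ.range = H i) ∧
        (H i).index = 0 := by
  classical
  set a0 : Fin n := ⟨0, by omega⟩ with ha0
  set a1 : Fin n := ⟨1, by omega⟩ with ha1
  have h01 : a0 ≠ a1 := by simp [ha0, ha1, Fin.ext_iff]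
  refine ⟨fun i => (Mal.phi a0 a1 (i.1 + 1)).range, ?_, ?_⟩
  · intro i j g hne
    rcases Subgroup.bot_or_exists_ne_one
        (conjSubgroup g ((Mal.phi a0 a1 (i.1 + 1)).range) ⊓ (Mal.phi a0 a1 (j.1 + 1)).range)
      with hbot | ⟨z, hz, hz1⟩
    · exact absurd hbot hne
    · obtain ⟨hzc, hzj⟩ := Subgroup.mem_inf.mp hz
      obtain ⟨x, hxH, hxz⟩ := Subgroup.mem_map.mp hzc
      have hxz' : g * x * g⁻¹ = z := by simpa using hxz
      have hx1 : x ≠ 1 := by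
        rintro rfl
        apply hz1
        rw [← hxz']
        simp
      have hyz : g * x * g⁻¹ ∈ (Mal.phi a0 a1 (j.1 + 1)).range := by rw [hxz']; exact hzj
      obtain ⟨hm, hg⟩ := Mal.main_core h01 (by omega) (by omega) g x hxH hx1 hyz
      exact ⟨Fin.ext (by omega), hg⟩
  · intro i
    exact ⟨⟨Mal.phi a0 a1 (i.1 + 1), Mal.phi_injective h01 _, rfl⟩, Mal.index_zero h01 _⟩
end

section
/- Let G be a group and x : Fin m → G a family of elements generating G (the subgroup closure of the range of x is all of G). Let r : Fin k → FreeGroup (Fin s) be a family of relators and let Q = PresentedGroup (range r) be the group presented by generators a₁, …, a_s and relators r₁, …, r_k. Let P = G ∗ FreeGroup (Fin s) be the free product, with canonical injections inl : G → P and inr : FreeGroup (Fin s) → P, and write a_i = inr (FreeGroup.of i). Let w : Fin k → G, w' : Fin s → Fin m → G, and w'' : Fin s → Fin m → G be arbitrary families of elements of G, and let R be the normal closure in P of the set consisting of the elements inr(r_ℓ) · inl(w_ℓ) for ℓ ∈ Fin k, the elements a_i · inl(x_j) · a_i⁻¹ · inl(w'_{ij}) for i ∈ Fin s, j ∈ Fin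 m, and the elements a_i⁻¹ · inl(x_j) · a_i · inl(w''_{ij}) for i ∈ Fin s, j ∈ Fin m. Let Γ = P ⧸ R with quotient map π : P → Γ, and let N be the range of the composite homomorphism π ∘ inl : G → Γ. Then: (i) N is a normal subgroup of Γ; and (ii) there exists a surjective group homomorphism φ : Γ → Q whose kernel is exactly N. In particular there is a short exact sequence 1 → N → Γ → Q → 1 in which N is a quotient of G. -/
open Monoid

/-- The Rips-type relators in the free product `G ∗ FreeGroup (Fin s)`:
the elements `r ℓ · w ℓ`, `aᵢ xⱼ aᵢ⁻¹ · w'ᵢⱼ` and `aᵢ⁻¹ xⱼ aᵢ · w''ᵢⱼ`,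
where `aᵢ` denotes the `i`-th generator of the free factor `FreeGroup (Fin s)`. -/
def ripsRelators {G : Type*} [Group G] {m k s : ℕ} (x : Fin m → G)
    (r : Fin k → FreeGroup (Fin s)) (w : Fin k → G) (w' w'' : Fin s → Fin m → G) :
    Set (Coprod G (FreeGroup (Fin s))) :=
  (Set.range fun ℓ : Fin k => Coprod.inr (r ℓ) * Coprod.inl (w ℓ)) ∪
  (Set.range fun p : Fin s × Fin m =>
    Coprod.inr (FreeGroup.of p.1) * Coprod.inl (x p.2) *
      (Coprod.inr (FreeGroup.of p.1))⁻¹ * Coprod.inl (w' p.1 p.2)) ∪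
  (Set.range fun p : Fin s × Fin m =>
    (Coprod.inr (FreeGroup.of p.1))⁻¹ * Coprod.inl (x p.2) *
      Coprod.inr (FreeGroup.of p.1) * Coprod.inl (w'' p.1 p.2))

/-- The group-theoretic content of Theorem 4.1: if `Γ` is the quotient of
`G ∗ FreeGroup (Fin s)` by the normal closure of the Rips-type relators, and `N` is the
image of `G` in `Γ`, then `N` is normal in `Γ` and there is a surjection `Γ → Q` onto the
presented group `Q = ⟨a₁,…,a_s ∣ r₁,…,r_k⟩` with kernel exactly `N`, yielding a short
exact sequence `1 → N → Γ → Q → 1` in which `N` is a quotient of `G`. -/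
theorem rips_exact_sequence {G : Type*} [Group G] {m k s : ℕ} (x : Fin m → G)
    (hx : Subgroup.closure (Set.range x) = ⊤)
    (r : Fin k → FreeGroup (Fin s)) (w : Fin k → G) (w' w'' : Fin s → Fin m → G)
    (N : Subgroup (Coprod G (FreeGroup (Fin s)) ⧸
      Subgroup.normalClosure (ripsRelators x r w w' w'')))
    (hN : N = ((QuotientGroup.mk' (Subgroup.normalClosure (ripsRelators x r w w' w''))).comp
      Coprod.inl).range) :
    N.Normal ∧
    ∃ φ : (Coprod G (FreeGroup (Fin s)) ⧸
        Subgroup.normalClosure (ripsRelators x r w w' w'')) →* PresentedGroup (Set.range r),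
      Function.Surjective φ ∧ φ.ker = N := by
  subst hN
  set R := Subgroup.normalClosure (ripsRelators x r w w' w'') with hR
  set π := QuotientGroup.mk' R with hπ
  set N := (π.comp (Coprod.inl : G →* Coprod G (FreeGroup (Fin s)))).range with hNdef
  have hmemN : ∀ g : G, π (Coprod.inl g) ∈ N := fun g => ⟨g, rfl⟩
  -- relators hold in the quotient
  have hone : ∀ p ∈ ripsRelators x r w w' w'', π p = 1 := by
    intro p hp
    rw [hπ, QuotientGroup.mk'_apply, QuotientGroup.eq_one_iff]
    exact Subgroup.subset_normalClosure hp
  have hrel1 : ∀ ℓ : Fin k, π (Coprod.inr (r ℓ)) = (π (Coprod.inl (w ℓ)))⁻¹ := by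
    intro ℓ
    have := hone _ (Or.inl (Or.inl ⟨ℓ, rfl⟩))
    rw [map_mul] at this
    exact eq_inv_of_mul_eq_one_left this
  have hrel2 : ∀ (i : Fin s) (j : Fin m),
      π (Coprod.inr (FreeGroup.of i)) * π (Coprod.inl (x j)) *
        (π (Coprod.inr (FreeGroup.of i)))⁻¹ = (π (Coprod.inl (w' i j)))⁻¹ := by
    intro i j
    have := hone _ (Or.inl (Or.inr ⟨(i, j), rfl⟩))
    rw [map_mul, map_mul, map_mul, map_inv] at this
    exact eq_inv_of_mul_eq_one_left this
  have hrel3 : ∀ (i : Fin s) (j : Fin m),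
      (π (Coprod.inr (FreeGroup.of i)))⁻¹ * π (Coprod.inl (x j)) *
        π (Coprod.inr (FreeGroup.of i)) = (π (Coprod.inl (w'' i j)))⁻¹ := by
    intro i j
    have := hone _ (Or.inr ⟨(i, j), rfl⟩)
    rw [map_mul, map_mul, map_mul, map_inv] at this
    exact eq_inv_of_mul_eq_one_left this
  -- conjugation by generators preserves N
  have hconj : ∀ (t : Coprod G (FreeGroup (Fin s)))
      (ht : ∀ j : Fin m, π t * π (Coprod.inl (x j)) * (π t)⁻¹ ∈ N) (g : G),
      π t * π (Coprod.inl g) * (π t)⁻¹ ∈ N := by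
    intro t ht g
    have htop : Subgroup.comap
        (((MulAut.conj (π t)).toMonoidHom).comp (π.comp Coprod.inl)) N = ⊤ := by
      rw [eq_top_iff, ← hx, Subgroup.closure_le]
      rintro _ ⟨j, rfl⟩
      simpa [Subgroup.mem_comap, MulAut.conj_apply, mul_assoc] using ht j
    have : g ∈ Subgroup.comap
        (((MulAut.conj (π t)).toMonoidHom).comp (π.comp Coprod.inl)) N := by
      rw [htop]; trivial
    simpa [Subgroup.mem_comap, MulAut.conj_apply, mul_assoc] using this
  have hconj2 : ∀ (i : Fin s) (g : G),
      π (Coprod.inr (FreeGroup.of i)) * π (Coprod.inl g) *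
        (π (Coprod.inr (FreeGroup.of i)))⁻¹ ∈ N := by
    intro i g
    refine hconj _ (fun j => ?_) g
    rw [hrel2 i j]
    exact N.inv_mem (hmemN _)
  have hconj3 : ∀ (i : Fin s) (g : G),
      (π (Coprod.inr (FreeGroup.of i)))⁻¹ * π (Coprod.inl g) *
        π (Coprod.inr (FreeGroup.of i)) ∈ N := by
    intro i g
    have := hconj (Coprod.inr (FreeGroup.of i))⁻¹ (fun j => by
      rw [map_inv, inv_inv, hrel3 i j]
      exact N.inv_mem (hmemN _)) g
    simpa [map_inv] using this
  -- N is normal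
  have hNnormal : N.Normal := by
    rw [← Subgroup.normalizer_eq_top_iff, eq_top_iff]
    -- every element of Γ comes from P, and P is generated by inl G and inr of i
    intro γ _
    obtain ⟨p, rfl⟩ := QuotientGroup.mk'_surjective R γ
    revert p
    have key : ∀ p : Coprod G (FreeGroup (Fin s)),
        p ∈ Subgroup.closure ((Set.range (Coprod.inl : G →* _)) ∪
          (Set.range fun i : Fin s => (Coprod.inr (FreeGroup.of i) : Coprod G (FreeGroup (Fin s))))) →
        π p ∈ Subgroup.normalizer (N : Set _) := by
      intro p hp
      refine Subgroup.closure_induction ?_ ?_ ?_ ?_ hp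
      · rintro _ (⟨g, rfl⟩ | ⟨i, rfl⟩)
        · intro n
          constructor
          · rintro ⟨h, rfl⟩
            have : π (Coprod.inl g) * π.comp Coprod.inl h * (π (Coprod.inl g))⁻¹
                = π (Coprod.inl (g * h * g⁻¹)) := by
              simp [map_mul, map_inv]
            rw [this]; exact hmemN _
          · intro hmem
            obtain ⟨h, hh⟩ := hmem
            simp only [MonoidHom.comp_apply] at hh
            have : n = (π (Coprod.inl g))⁻¹ * π (Coprod.inl h) * π (Coprod.inl g) := by
              rw [hh]; group
            rw [this]
            have : (π (Coprod.inl g))⁻¹ * π (Coprod.inl h) * π (Coprod.inl g)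
                = π (Coprod.inl (g⁻¹ * h * g)) := by simp [map_mul, map_inv]
            rw [this]; exact hmemN _
        · intro n
          constructor
          · rintro ⟨h, rfl⟩
            exact hconj2 i h
          · intro hmem
            obtain ⟨h, hh⟩ := hmem
            simp only [MonoidHom.comp_apply] at hh
            have : n = (π (Coprod.inr (FreeGroup.of i)))⁻¹ * π (Coprod.inl h) *
                π (Coprod.inr (FreeGroup.of i)) := by rw [hh]; group
            rw [this]
            exact hconj3 i h
      · rw [map_one]; exact Subgroup.one_mem _
      · intro a b _ _ ha hb
        rw [map_mul]; exact Subgroup.mul_mem _ ha hb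
      · intro a _ ha
        rw [map_inv]; exact Subgroup.inv_mem _ ha
    intro p _
    refine key p ?_
    -- P is generated by these elements
    have hp : p ∈ Submonoid.closure
        ((Set.range (Coprod.inl : G →* _)) ∪ (Set.range (Coprod.inr : FreeGroup (Fin s) →* _))) := by
      rw [Coprod.mclosure_range_inl_union_inr]; trivial
    refine Submonoid.closure_induction ?_ ?_ ?_ hp
    · rintro _ (⟨g, rfl⟩ | ⟨u, rfl⟩)
      · exact Subgroup.subset_closure (Or.inl ⟨g, rfl⟩)
      · have hu : u ∈ Subgroup.closure (Set.range (FreeGroup.of : Fin s → FreeGroup (Fin s))) := by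
          rw [FreeGroup.closure_range_of]; trivial
        refine Subgroup.closure_induction ?_ ?_ ?_ ?_ hu
        · rintro _ ⟨i, rfl⟩
          exact Subgroup.subset_closure (Or.inr ⟨i, rfl⟩)
        · rw [map_one]; exact Subgroup.one_mem _
        · intro a b _ _ ha hb
          rw [map_mul]; exact Subgroup.mul_mem _ ha hb
        · intro a _ ha
          rw [map_inv]; exact Subgroup.inv_mem _ ha
    · exact Subgroup.one_mem _
    · intro a b _ _ ha hb
      exact Subgroup.mul_mem _ ha hb
  refine ⟨hNnormal, ?_⟩
  -- the map to the presented group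
  set φ₀ : Coprod G (FreeGroup (Fin s)) →* PresentedGroup (Set.range r) :=
    Coprod.lift 1 (PresentedGroup.mk (Set.range r)) with hφ₀
  have hmk_one : ∀ ℓ : Fin k, PresentedGroup.mk (Set.range r) (r ℓ) = 1 := by
    intro ℓ
    have : r ℓ ∈ Subgroup.normalClosure (Set.range r) :=
      Subgroup.subset_normalClosure ⟨ℓ, rfl⟩
    exact (QuotientGroup.eq_one_iff _).2 this
  have hker0 : R ≤ φ₀.ker := by
    rw [hR]
    refine Subgroup.normalClosure_le_normal ?_
    rintro p (⟨⟨ℓ, rfl⟩ | ⟨q, rfl⟩⟩ | ⟨q, rfl⟩) <;>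
      simp [MonoidHom.mem_ker, hφ₀, Coprod.lift_apply_inl, Coprod.lift_apply_inr, hmk_one]
  set φ : (Coprod G (FreeGroup (Fin s)) ⧸ R) →* PresentedGroup (Set.range r) :=
    QuotientGroup.lift R φ₀ hker0 with hφ
  have hφπ : ∀ p, φ (π p) = φ₀ p := fun p => rfl
  refine ⟨φ, ?_, ?_⟩
  · -- surjective
    intro q
    obtain ⟨u, rfl⟩ := PresentedGroup.mk_surjective (Set.range r) q
    exact ⟨π (Coprod.inr u), by rw [hφπ]; simp [hφ₀, Coprod.lift_apply_inr]⟩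
  · -- kernel
    apply le_antisymm
    · -- ker φ ≤ N : build a retraction Q → Γ/N
      set mkN := QuotientGroup.mk' N with hmkN
      have hrels : ∀ ρ ∈ Set.range r,
          FreeGroup.lift (fun i : Fin s => mkN (π (Coprod.inr (FreeGroup.of i)))) ρ = 1 := by
        rintro _ ⟨ℓ, rfl⟩
        have hlift : FreeGroup.lift (fun i : Fin s => mkN (π (Coprod.inr (FreeGroup.of i))))
            = (mkN.comp (π.comp Coprod.inr)) := by
          apply FreeGroup.ext_hom
          intro a; simp
        rw [hlift]
        simp only [MonoidHom.comp_apply]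
        rw [hrel1 ℓ, map_inv]
        have : mkN (π (Coprod.inl (w ℓ))) = 1 := (QuotientGroup.eq_one_iff _).2 (hmemN _)
        rw [this, inv_one]
      set ψ : PresentedGroup (Set.range r) →* (Coprod G (FreeGroup (Fin s)) ⧸ R) ⧸ N :=
        PresentedGroup.toGroup hrels with hψ
      have hcomp : ψ.comp φ = mkN := by
        have : (ψ.comp φ).comp π = mkN.comp π := by
          have : ((ψ.comp φ).comp π).comp Coprod.inr = (mkN.comp π).comp Coprod.inr := by
            apply FreeGroup.ext_hom
            intro a
            simp only [MonoidHom.comp_apply]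
            rw [hφπ]
            have h1 : φ₀ (Coprod.inr (FreeGroup.of a)) = PresentedGroup.of a := by
              simp [hφ₀, Coprod.lift_apply_inr]; rfl
            rw [h1, hψ, PresentedGroup.toGroup.of]
          apply Coprod.hom_ext _ this
          ext g
          simp only [MonoidHom.comp_apply]
          rw [hφπ]
          have h1 : φ₀ (Coprod.inl g) = 1 := by simp [hφ₀, Coprod.lift_apply_inl]
          rw [h1, map_one]
          exact ((QuotientGroup.eq_one_iff _).2 (hmemN g)).symm
        refine MonoidHom.ext fun γ => ?_
        obtain ⟨p, rfl⟩ := QuotientGroup.mk'_surjective R γ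
        exact congrFun (congrArg (fun f => f.toFun) this) p
      intro γ hγ
      have : mkN γ = 1 := by
        rw [← hcomp]
        simp only [MonoidHom.comp_apply]
        rw [hγ, map_one]
      exact (QuotientGroup.eq_one_iff _).1 this
    · -- N ≤ ker φ
      rintro _ ⟨g, rfl⟩
      have : φ (π (Coprod.inl g)) = 1 := by
        rw [hφπ]; simp [hφ₀, Coprod.lift_apply_inl]
      exact this
end

section
/- Let F be a free group of finite rank n ≥ 2. Then there exists a subgroup J of F that is malnormal in F and free of rank 2, i.e. there is an injective group homomorphism from FreeGroup (Fin 2) into F whose range J satisfies: for every g ∈ F, g J g⁻¹ ∩ J ≠ {1} implies g ∈ J. -/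
section Aux

variable {α : Type*} [DecidableEq α]

/-- The no-cancellation relation on letters. -/
def NC (a b : α × Bool) : Prop := ¬(a.1 = b.1 ∧ a.2 = !b.2)

lemma chain'_of_reduce_eq (L : List (α × Bool)) (h : FreeGroup.reduce L = L) :
    List.Chain' NC L := by
  induction L with
  | nil => exact List.isChain_nil
  | cons x L ih =>
    have hsub : List.Sublist (FreeGroup.reduce L) L := (FreeGroup.reduce.red (L := L)).sublist
    rw [FreeGroup.reduce.cons] at h
    rcases hL : FreeGroup.reduce L with _ | ⟨y, ys⟩
    · rw [hL] at h
      change [x] = x :: L at h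
      obtain rfl : L = [] := by simpa using h.symm
      exact List.isChain_singleton _
    · rw [hL] at h
      change (if x.1 = y.1 ∧ x.2 = !y.2 then ys else x :: y :: ys) = x :: L at h
      by_cases hc : x.1 = y.1 ∧ x.2 = !y.2
      · rw [if_pos hc] at h
        have : ys.length < (x :: L).length := by
          have := hL ▸ hsub
          have := this.length_le
          simp at this ⊢; omega
        rw [h] at this
        simp at this
      · rw [if_neg hc] at h
        have hL' : L = y :: ys := by simpa using h.symm
        have := ih (by rw [hL', ← hL]; exact FreeGroup.reduce.idem)
        rw [hL']
        exact List.IsChain.cons_cons (by exact hc) (hL' ▸ this)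

lemma reduce_eq_of_chain' (L : List (α × Bool)) (h : List.Chain' NC L) :
    FreeGroup.reduce L = L := by
  induction L with
  | nil => rfl
  | cons x L ih =>
    rw [FreeGroup.reduce.cons, ih h.tail]
    cases L with
    | nil => rfl
    | cons y ys =>
      have : NC x y := List.isChain_cons_cons.mp h |>.1
      simp only [if_neg this]

lemma chain'_toWord (x : FreeGroup α) : List.Chain' NC x.toWord :=
  chain'_of_reduce_eq _ (FreeGroup.reduce_toWord x)

lemma mem_invRev {l : α × Bool} {L : List (α × Bool)} :
    l ∈ FreeGroup.invRev L ↔ (l.1, !l.2) ∈ L := by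
  simp only [FreeGroup.invRev, List.mem_reverse, List.mem_map]
  constructor
  · rintro ⟨⟨a, b⟩, hab, rfl⟩; simpa using hab
  · intro h; exact ⟨(l.1, !l.2), h, by simp⟩

lemma chain'_invRev {L : List (α × Bool)} (h : List.Chain' NC L) :
    List.Chain' NC (FreeGroup.invRev L) := by
  unfold List.Chain' at h ⊢
  rw [FreeGroup.invRev, List.isChain_reverse]
  rw [List.isChain_map]
  refine h.imp ?_
  rintro ⟨a, b⟩ ⟨c, d⟩ hnc ⟨h1, h2⟩
  exact hnc ⟨h1.symm, by simpa using h2.symm⟩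

end Aux

section Construction

variable {n : ℕ}

/-- A letter is *small* if its index is `< 2`. -/
def smallLetter (l : Fin n × Bool) : Prop := (l.1 : ℕ) < 2

/-- The subgroup of elements whose reduced word only uses small letters. -/
def smallSubgroup (n : ℕ) : Subgroup (FreeGroup (Fin n)) where
  carrier := {x | ∀ l ∈ x.toWord, smallLetter l}
  one_mem' := by simp [FreeGroup.toWord_one]
  mul_mem' := by
    intro x y hx hy l hl
    have := List.Sublist.mem hl (FreeGroup.toWord_mul_sublist x y)
    rcases List.mem_append.mp this with h | h
    · exact hx l h
    · exact hy l h
  inv_mem' := by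
    intro x hx l hl
    rw [FreeGroup.toWord_inv, mem_invRev] at hl
    exact hx (l.1, !l.2) hl

lemma mem_smallSubgroup {x : FreeGroup (Fin n)} :
    x ∈ smallSubgroup n ↔ ∀ l ∈ x.toWord, smallLetter l := Iff.rfl

lemma mk_mem_smallSubgroup {L : List (Fin n × Bool)} (hL : ∀ l ∈ L, smallLetter l) :
    FreeGroup.mk L ∈ smallSubgroup n := by
  intro l hl
  rw [FreeGroup.toWord_mk] at hl
  exact hL l ((FreeGroup.reduce.red (L := L)).sublist.mem hl)

end Construction

/-- A free group of rank `n ≥ 2` contains a malnormal subgroup that is free of rank 2. -/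
theorem exists_malnormal_free_rank_two (n : ℕ) (hn : 2 ≤ n) :
    ∃ J : Subgroup (FreeGroup (Fin n)),
      IsMalnormal J ∧
      ∃ ψ : FreeGroup (Fin 2) →* FreeGroup (Fin n),
        Function.Injective ψ ∧ ψ.range = J := by
  refine ⟨smallSubgroup n, ?_, FreeGroup.lift (fun i => FreeGroup.of (Fin.castLE hn i)), ?_, ?_⟩
  · -- malnormality
    intro g hne
    -- extract a nontrivial common element
    rw [Subgroup.ne_bot_iff_exists_ne_one] at hne
    obtain ⟨⟨x, hx⟩, hx1⟩ := hne
    obtain ⟨hxc, hxJ⟩ := hx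
    obtain ⟨w, hwJ, hwx⟩ := hxc
    simp only [MulEquiv.toMonoidHom_eq_coe, MonoidHom.coe_coe, MulAut.conj_apply] at hwx
    have hx1' : x ≠ 1 := by simpa [Subtype.ext_iff] using hx1
    subst hwx
    -- now: w ∈ J, g*w*g⁻¹ ∈ J, g*w*g⁻¹ ≠ 1; goal g ∈ J
    have hw1 : w ≠ 1 := by rintro rfl; simp at hx1'
    by_contra hg
    simp only [mem_smallSubgroup, not_forall] at hg
    -- decompose the reduced word of g
    set p : Fin n × Bool → Bool := fun l => decide ((l.1 : ℕ) < 2) with hp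
    have hpl : ∀ l : Fin n × Bool, p l = true ↔ smallLetter l := by
      intro l; rw [hp]; simp [smallLetter]
    set u := g.toWord with hu
    set a := u.takeWhile p with ha
    set r := u.dropWhile p with hr
    have hur : u = a ++ r := (List.takeWhile_append_dropWhile (p := p) (l := u)).symm
    have hrne : r ≠ [] := by
      intro h
      rw [hr, List.dropWhile_eq_nil_iff] at h
      obtain ⟨l, hl, hls⟩ := hg
      exact hls ((hpl l).mp (h l hl))
    have hrhead : ¬ p (r.head hrne) := by
      have h0 : 0 < r.length := List.length_pos_iff.mpr hrne
      have := List.dropWhile_get_zero_not p u (hr ▸ h0)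
      rw [List.head_eq_getElem_zero]
      simpa [List.get_eq_getElem, hr] using this
    set b := r.rdropWhile p with hb
    set c := r.rtakeWhile p with hc
    have hrbc : r = b ++ c := by
      rw [hb, hc, List.rdropWhile, List.rtakeWhile, ← List.reverse_append,
        List.takeWhile_append_dropWhile, List.reverse_reverse]
    have hbne : b ≠ [] := by
      intro h
      rw [hb, List.rdropWhile_eq_nil_iff] at h
      exact hrhead (h _ (List.head_mem hrne))
    have hblast : ¬ p (b.getLast hbne) := List.rdropWhile_last_not p r hbne
    have hbhead : ¬ p (b.head hbne) := by
      obtain ⟨t, ht⟩ : b <+: r := hb ▸ List.rdropWhile_prefix p r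
      have h1 : r.head? = some (b.head hbne) := by
        rw [← ht]
        rcases b with _ | ⟨x, bs⟩
        · exact absurd rfl hbne
        · simp
      have h2 : r.head? = some (r.head hrne) := List.head?_eq_head hrne
      rw [h1] at h2
      injection h2 with h2
      rwa [← h2] at hrhead
    -- group elements
    have hg_eq : g = FreeGroup.mk a * FreeGroup.mk b * FreeGroup.mk c := by
      rw [FreeGroup.mul_mk, FreeGroup.mul_mk, List.append_assoc, ← hrbc, ← hur]
      exact (FreeGroup.mk_toWord).symm
    have haJ : FreeGroup.mk a ∈ smallSubgroup n :=
      mk_mem_smallSubgroup (fun l hl => (hpl l).mp (List.mem_takeWhile_imp (ha ▸ hl)))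
    have hcJ : FreeGroup.mk c ∈ smallSubgroup n :=
      mk_mem_smallSubgroup (fun l hl => (hpl l).mp (List.mem_rtakeWhile_imp (hc ▸ hl)))
    set w' := FreeGroup.mk c * w * (FreeGroup.mk c)⁻¹ with hw'
    have hw'J : w' ∈ smallSubgroup n := mul_mem (mul_mem hcJ hwJ) (inv_mem hcJ)
    have hw'1 : w' ≠ 1 := by
      intro h
      apply hw1
      have h2 : w = (FreeGroup.mk c)⁻¹ * (FreeGroup.mk c * w * (FreeGroup.mk c)⁻¹) *
          FreeGroup.mk c := by group
      rw [← hw', h] at h2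
      rw [h2]; group
    have h2 : FreeGroup.mk b * w' * (FreeGroup.mk b)⁻¹ ∈ smallSubgroup n := by
      have heq : FreeGroup.mk b * w' * (FreeGroup.mk b)⁻¹ =
          (FreeGroup.mk a)⁻¹ * (g * w * g⁻¹) * FreeGroup.mk a := by
        rw [hg_eq, hw']; group
      rw [heq]
      exact mul_mem (mul_mem (inv_mem haJ) hxJ) haJ
    set v := w'.toWord with hv
    have hvne : v ≠ [] := fun h => hw'1 (FreeGroup.toWord_eq_nil_iff.mp (hv ▸ h))
    have hvsmall : ∀ l ∈ v, smallLetter l := hw'J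
    -- the concatenated word is reduced
    have hchb : List.Chain' NC b := by
      refine (chain'_toWord g).infix ⟨a, c, ?_⟩
      rw [List.append_assoc, ← hrbc]
      exact hur.symm
    have hchv : List.Chain' NC v := chain'_toWord w'
    have hchib : List.Chain' NC (FreeGroup.invRev b) := chain'_invRev hchb
    set W := b ++ (v ++ FreeGroup.invRev b) with hW
    have hibne : FreeGroup.invRev b ≠ [] := by
      simp [FreeGroup.invRev, hbne]
    have hib_head : (FreeGroup.invRev b).head? =
        some ((b.getLast hbne).1, !(b.getLast hbne).2) := by
      rw [FreeGroup.invRev, List.head?_reverse, List.getLast?_map,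
        List.getLast?_eq_getLast hbne]
      rfl
    have hchW : List.Chain' NC W := by
      unfold List.Chain'; rw [hW, List.isChain_append]
      refine ⟨hchb, ?_, ?_⟩
      · rw [List.isChain_append]
        refine ⟨hchv, hchib, ?_⟩
        intro x hx y hy
        rw [hib_head] at hy
        injection hy with hy
        have hxv : x ∈ v := List.mem_of_mem_getLast? hx
        have hxs : (x.1 : ℕ) < 2 := hvsmall x hxv
        rintro ⟨h1, -⟩
        apply hblast
        apply (hpl _).mpr
        show ((b.getLast hbne).1 : ℕ) < 2
        rw [← hy] at h1
        rw [← h1]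
        exact hxs
      · intro x hx y hy
        have hxb : x = b.getLast hbne := by
          rw [List.getLast?_eq_getLast hbne] at hx
          injection hx with hx
          exact hx.symm
        have hyv : y ∈ v := by
          rcases v with _ | ⟨z, zs⟩
          · exact absurd rfl hvne
          · simp only [List.cons_append, List.head?_cons] at hy
            injection hy with hy
            rw [← hy]
            exact List.mem_cons_self
        have hys : (y.1 : ℕ) < 2 := hvsmall y hyv
        rintro ⟨h1, -⟩
        apply hblast
        apply (hpl _).mpr
        show ((b.getLast hbne).1 : ℕ) < 2
        rw [hxb] at h1
        rw [h1]
        exact hys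
    have hmkW : FreeGroup.mk b * w' * (FreeGroup.mk b)⁻¹ = FreeGroup.mk W := by
      conv_lhs => rw [← FreeGroup.mk_toWord (x := w'), ← hv]
      rw [FreeGroup.inv_mk, FreeGroup.mul_mk, FreeGroup.mul_mk, List.append_assoc]
    have hWsmall : ∀ l ∈ W, smallLetter l := by
      intro l hl
      have := h2
      rw [hmkW] at this
      have h3 := this l
      rw [FreeGroup.toWord_mk, reduce_eq_of_chain' W hchW] at h3
      exact h3 hl
    apply hbhead
    have : smallLetter (b.head hbne) := hWsmall _ (by
      rw [hW]
      exact List.mem_append_left _ (List.head_mem hbne))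
    exact (hpl _).mpr this
  · -- injectivity via retraction
    set ψ := FreeGroup.lift (fun i : Fin 2 => FreeGroup.of (Fin.castLE hn i)) with hψ
    set ρ := FreeGroup.lift (fun i : Fin n =>
      if h : (i : ℕ) < 2 then FreeGroup.of (⟨(i : ℕ), h⟩ : Fin 2) else 1) with hρ
    have hcomp : ρ.comp ψ = MonoidHom.id _ := by
      apply FreeGroup.ext_hom
      intro a
      simp only [MonoidHom.comp_apply, MonoidHom.id_apply, hψ, hρ, FreeGroup.lift_apply_of]
      have h2 : ((Fin.castLE hn a : Fin n) : ℕ) < 2 := a.2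
      rw [dif_pos h2]
      exact congrArg FreeGroup.of (Fin.ext rfl)
    intro x y hxy
    have := congrArg ρ hxy
    calc x = ρ.comp ψ x := by rw [hcomp]; rfl
    _ = ρ.comp ψ y := by simpa using this
    _ = y := by rw [hcomp]; rfl
  · -- range = smallSubgroup
    apply le_antisymm
    · rintro _ ⟨x, rfl⟩
      induction x using FreeGroup.induction_on with
      | C1 => simp only [map_one]; exact one_mem _
      | of a =>
        show (FreeGroup.lift fun i => FreeGroup.of (Fin.castLE hn i)) (FreeGroup.of a) ∈
          smallSubgroup n
        rw [FreeGroup.lift_apply_of]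
        intro l hl
        rw [FreeGroup.toWord_of, List.mem_singleton] at hl
        subst hl
        exact a.2
      | inv_of a _ => simp only [map_inv]; exact inv_mem (by assumption)
      | mul x y hx hy => simp only [map_mul]; exact mul_mem hx hy
    · intro x hx
      rw [← FreeGroup.mk_toWord (x := x)]
      have hx' : ∀ l ∈ x.toWord, smallLetter l := hx
      generalize x.toWord = L at hx' ⊢
      clear hx
      induction L with
      | nil => exact one_mem _
      | cons l L ih =>
        have : FreeGroup.mk (l :: L) = FreeGroup.mk [l] * FreeGroup.mk L := by
          rw [FreeGroup.mul_mk]; rfl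
        rw [this]
        refine mul_mem ?_ (ih (fun l' hl' => hx' l' (List.mem_cons_of_mem _ hl')))
        have hs : (l.1 : ℕ) < 2 := hx' l List.mem_cons_self
        have hof : FreeGroup.of l.1 ∈ (FreeGroup.lift
            (fun i : Fin 2 => FreeGroup.of (Fin.castLE hn i))).range := by
          refine ⟨FreeGroup.of (⟨(l.1 : ℕ), hs⟩ : Fin 2), ?_⟩
          rw [FreeGroup.lift_apply_of]
          congr 1
        rcases l with ⟨i, b⟩
        cases b
        · have : FreeGroup.mk [((i : Fin n), false)] = (FreeGroup.of i)⁻¹ := by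
            have h1 : FreeGroup.of i = FreeGroup.mk [(i, true)] := rfl
            rw [h1, FreeGroup.inv_mk]
            congr 1
          rw [this]
          exact inv_mem hof
        · exact hof
end
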